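/- arXiv:2008.07806 — 5 statements merged into one kernel-verified Lean document; each statement's English description precedes it below -/
import Mathlib

section
/- Let a and b be nonzero integers, let A be the 3×3 upper unitriangular integer matrix with (1,2)-entry a and all other off-diagonal entries 0, and let B be the 3×3 upper unitriangular integer matrix with (2,3)-entry b and all other off-diagonal entries 0. Then the assignment x₁ ↦ A, x₂ ↦ B determines a well-defined group homomorphism from the reduced free group K₂ into GL₃(ℤ), and this homomorphism is injective. -/
/-- The commutator `[x, y] = x⁻¹ y⁻¹ x y` used in the paper. -/
def pcomm {G : Type*} [Group G] (x y : G) : G := x⁻¹ * y⁻¹ * x * y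

/-- The relators of the reduced free group: `[xᵢ, g⁻¹ xᵢ g]` for every generator `xᵢ`
and every `g` in the free group. -/
def reducedRels (n : ℕ) : Set (FreeGroup (Fin n)) :=
  { x | ∃ (i : Fin n) (g : FreeGroup (Fin n)),
        x = pcomm (FreeGroup.of i) (g⁻¹ * FreeGroup.of i * g) }

/-- The reduced free group `K_n`, the quotient of the free group `F_n` by the normal
closure of the relators `[xᵢ, g⁻¹ xᵢ g]`. -/
abbrev K (n : ℕ) := FreeGroup (Fin n) ⧸ Subgroup.normalClosure (reducedRels n)

/-- The generator `x_{i+1}` of `K_n` (0-based index `i`). -/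
def xg {n : ℕ} (i : Fin n) : K n := QuotientGroup.mk (FreeGroup.of i)

/-! ### Auxiliary material -/

section Aux

lemma pcomm_eq_one_of_comm {G : Type*} [Group G] {u w : G} (h : u * w = w * u) :
    pcomm u w = 1 := by
  rw [pcomm, mul_assoc, h]; group

lemma comm_of_pcomm {G : Type*} [Group G] {u w : G} (h : pcomm u w = 1) :
    u * w = w * u := by
  have h' : u⁻¹ * w⁻¹ * u * w = 1 := h
  calc u * w = (w * u) * (u⁻¹ * w⁻¹ * u * w) := by group
    _ = w * u := by rw [h', mul_one]

lemma map_pcomm {G H : Type*} [Group G] [Group H] (f : G →* H) (x y : G) :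
    f (pcomm x y) = pcomm (f x) (f y) := by
  simp [pcomm]

/-! #### Matrix layer -/

abbrev GL3 := Matrix.GeneralLinearGroup (Fin 3) ℤ

def UT (x y z : ℤ) : Matrix (Fin 3) (Fin 3) ℤ := !![1,x,y;0,1,z;0,0,1]

lemma UT_mul (x y z x' y' z' : ℤ) :
    UT x y z * UT x' y' z' = UT (x+x') (y'+y+x*z') (z+z') := by
  simp [UT, Matrix.mul_fin_three]; ring_nf; simp

lemma UT_one : UT 0 0 0 = 1 := by simp [UT, Matrix.one_fin_three]

lemma UT_eq_iff {x y z x' y' z' : ℤ} (h : UT x y z = UT x' y' z') :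
    x = x' ∧ y = y' ∧ z = z' := by
  refine ⟨?_, ?_, ?_⟩
  · have := congrFun (congrFun h 0) 1; simpa [UT] using this
  · have := congrFun (congrFun h 0) 2; simpa [UT] using this
  · have := congrFun (congrFun h 1) 2; simpa [UT] using this

lemma coe_inv_UT {M : GL3} {x y z : ℤ} (h : (M : Matrix (Fin 3) (Fin 3) ℤ) = UT x y z) :
    ((M⁻¹ : GL3) : Matrix (Fin 3) (Fin 3) ℤ) = UT (-x) (x*z-y) (-z) := by
  have h2 : (M : Matrix (Fin 3) (Fin 3) ℤ) * UT (-x) (x*z-y) (-z) = 1 := by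
    rw [h, UT_mul]; ring_nf; exact UT_one
  calc ((M⁻¹ : GL3) : Matrix (Fin 3) (Fin 3) ℤ)
      = ↑M⁻¹ * ((M : Matrix (Fin 3) (Fin 3) ℤ) * UT (-x) (x*z-y) (-z)) := by rw [h2, mul_one]
    _ = (↑M⁻¹ * (M : Matrix (Fin 3) (Fin 3) ℤ)) * UT (-x) (x*z-y) (-z) := by rw [mul_assoc]
    _ = UT (-x) (x*z-y) (-z) := by
        rw [← Matrix.GeneralLinearGroup.coe_mul, inv_mul_cancel]; simp

lemma UT_inv (x y z : ℤ) : (UT x y z)⁻¹ = UT (-x) (x*z-y) (-z) := by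
  apply Matrix.inv_eq_right_inv
  rw [UT_mul]; ring_nf; exact UT_one

/-- Key relation: a unitriangular `U` commutes with any conjugate of itself by a
unitriangular `V`. -/
lemma key_comm {U V : GL3} {u1 u2 u3 v1 v2 v3 : ℤ}
    (hU : (U : Matrix (Fin 3) (Fin 3) ℤ) = UT u1 u2 u3)
    (hV : (V : Matrix (Fin 3) (Fin 3) ℤ) = UT v1 v2 v3) :
    U * (V⁻¹ * U * V) = (V⁻¹ * U * V) * U := by
  apply Units.ext
  push_cast
  rw [hU, hV, UT_inv]
  simp only [UT_mul]
  ring_nf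

lemma coe_zpow_row {E : GL3} {x y : ℤ} (h : (E : Matrix (Fin 3) (Fin 3) ℤ) = UT x y 0)
    (p : ℤ) : ((E^p : GL3) : Matrix (Fin 3) (Fin 3) ℤ) = UT (p*x) (p*y) 0 := by
  induction p using Int.induction_on with
  | zero => simpa using UT_one.symm
  | succ n ih =>
      rw [zpow_add_one, Units.val_mul, ih, h, UT_mul]
      ring_nf
  | pred n ih =>
      rw [zpow_sub_one, Units.val_mul, ih, coe_inv_UT h, UT_mul]
      ring_nf

lemma coe_zpow_mid {E : GL3} {z : ℤ} (h : (E : Matrix (Fin 3) (Fin 3) ℤ) = UT 0 0 z)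
    (p : ℤ) : ((E^p : GL3) : Matrix (Fin 3) (Fin 3) ℤ) = UT 0 0 (p*z) := by
  induction p using Int.induction_on with
  | zero => simpa using UT_one.symm
  | succ n ih =>
      rw [zpow_add_one, Units.val_mul, ih, h, UT_mul]
      ring_nf
  | pred n ih =>
      rw [zpow_sub_one, Units.val_mul, ih, coe_inv_UT h, UT_mul]
      ring_nf

/-! #### Normal-form layer in an abstract group -/

section NF
variable {G : Type*} [Group G] {X Y c : G}

lemma nf_swap (hc : c = X⁻¹ * Y⁻¹ * X * Y) : Y * X = X * Y * c⁻¹ := by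
  subst hc; group

lemma nf_swap_q (hc : c = X⁻¹ * Y⁻¹ * X * Y) (hcen : ∀ g : G, Commute c g)
    (q : ℤ) : Y ^ q * X = X * Y ^ q * c ^ (-q) := by
  have hXY : Y * X = X * Y * c⁻¹ := nf_swap hc
  have hmY : ∀ k : ℤ, c ^ k * Y = Y * c ^ k := fun k => ((hcen Y).zpow_left k).eq
  have hmYi : ∀ k : ℤ, c ^ k * Y⁻¹ = Y⁻¹ * c ^ k := fun k => ((hcen Y⁻¹).zpow_left k).eq
  induction q using Int.induction_on with
  | zero => simp
  | succ n ih =>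
      calc Y ^ ((n : ℤ) + 1) * X = Y ^ (n : ℤ) * (Y * X) := by
            rw [zpow_add_one, mul_assoc]
        _ = (Y ^ (n : ℤ) * X) * (Y * c⁻¹) := by rw [hXY]; simp only [mul_assoc]
        _ = (X * Y ^ (n : ℤ)) * (c ^ (-(n : ℤ)) * Y) * c⁻¹ := by
            rw [ih]; simp only [mul_assoc]
        _ = X * Y ^ ((n : ℤ) + 1) * c ^ (-((n : ℤ) + 1)) := by
            rw [hmY, zpow_add_one]
            have : c ^ (-((n : ℤ) + 1)) = c ^ (-(n : ℤ)) * c⁻¹ := by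
              rw [← zpow_sub_one]; ring_nf
            rw [this]; simp only [mul_assoc]
  | pred n ih =>
      have hXYi : Y⁻¹ * X = X * Y⁻¹ * c := by
        have h2 : X = Y⁻¹ * (X * Y * c⁻¹) := by rw [← hXY]; group
        calc Y⁻¹ * X = Y⁻¹ * X * (Y * c⁻¹ * (c * Y⁻¹)) := by group
          _ = (Y⁻¹ * (X * Y * c⁻¹)) * c * Y⁻¹ := by simp only [mul_assoc]
          _ = X * c * Y⁻¹ := by rw [← h2]
          _ = X * Y⁻¹ * c := by rw [mul_assoc, (hcen Y⁻¹).eq, ← mul_assoc]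
      calc Y ^ (-(n : ℤ) - 1) * X = Y ^ (-(n : ℤ)) * (Y⁻¹ * X) := by
            rw [zpow_sub_one, mul_assoc]
        _ = (Y ^ (-(n : ℤ)) * X) * (Y⁻¹ * c) := by rw [hXYi]; simp only [mul_assoc]
        _ = (X * Y ^ (-(n : ℤ))) * (c ^ (n : ℤ) * Y⁻¹) * c := by
            rw [ih]; simp only [mul_assoc, neg_neg]
        _ = X * Y ^ (-(n : ℤ) - 1) * c ^ (-(-(n : ℤ) - 1)) := by
            rw [hmYi, zpow_sub_one]
            have : c ^ (-(-(n : ℤ) - 1)) = c ^ (n : ℤ) * c := by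
              rw [← zpow_add_one]; ring_nf
            rw [this]; simp only [mul_assoc]

lemma nf_swap_pq (hc : c = X⁻¹ * Y⁻¹ * X * Y) (hcen : ∀ g : G, Commute c g)
    (q p : ℤ) : Y ^ q * X ^ p = X ^ p * Y ^ q * c ^ (-(q * p)) := by
  have hmX : ∀ k : ℤ, c ^ k * X = X * c ^ k := fun k => ((hcen X).zpow_left k).eq
  have hmXi : ∀ k : ℤ, c ^ k * X⁻¹ = X⁻¹ * c ^ k := fun k => ((hcen X⁻¹).zpow_left k).eq
  induction p using Int.induction_on with
  | zero => simp
  | succ n ih =>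
      calc Y ^ q * X ^ ((n : ℤ) + 1) = (Y ^ q * X ^ (n : ℤ)) * X := by
            rw [zpow_add_one, ← mul_assoc]
        _ = X ^ (n : ℤ) * (Y ^ q * X) * c ^ (-(q * n)) := by
            rw [ih]; simp only [mul_assoc, hmX]
        _ = X ^ (n : ℤ) * (X * Y ^ q * c ^ (-q)) * c ^ (-(q * n)) := by
            rw [nf_swap_q hc hcen]
        _ = X ^ ((n : ℤ) + 1) * Y ^ q * c ^ (-(q * ((n : ℤ) + 1))) := by
            rw [zpow_add_one]
            have : c ^ (-(q * ((n : ℤ) + 1))) = c ^ (-q) * c ^ (-(q * (n : ℤ))) := by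
              rw [← zpow_add]; ring_nf
            rw [this]; simp only [mul_assoc]
  | pred n ih =>
      have hswapinv : Y ^ q * X⁻¹ = X⁻¹ * Y ^ q * c ^ q := by
        have h1 := nf_swap_q hc hcen (X := X) (Y := Y) q
        apply mul_right_cancel (b := X)
        calc Y ^ q * X⁻¹ * X = Y ^ q := by group
          _ = X⁻¹ * (X * Y ^ q * c ^ (-q)) * c ^ q := by group
          _ = X⁻¹ * (Y ^ q * X) * c ^ q := by rw [← h1]
          _ = X⁻¹ * Y ^ q * (c ^ q * X) := by rw [hmX]; simp only [mul_assoc]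
          _ = X⁻¹ * Y ^ q * c ^ q * X := by simp only [mul_assoc]
      calc Y ^ q * X ^ (-(n : ℤ) - 1) = (Y ^ q * X ^ (-(n : ℤ))) * X⁻¹ := by
            rw [zpow_sub_one, ← mul_assoc]
        _ = X ^ (-(n : ℤ)) * (Y ^ q * X⁻¹) * c ^ (-(q * (-(n : ℤ)))) := by
            rw [ih]; simp only [mul_assoc, hmXi]
        _ = X ^ (-(n : ℤ)) * (X⁻¹ * Y ^ q * c ^ q) * c ^ (-(q * (-(n : ℤ)))) := by
            rw [hswapinv]
        _ = X ^ (-(n : ℤ) - 1) * Y ^ q * c ^ (-(q * (-(n : ℤ) - 1))) := by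
            rw [zpow_sub_one]
            have : c ^ (-(q * (-(n : ℤ) - 1))) = c ^ q * c ^ (-(q * (-(n : ℤ)))) := by
              rw [← zpow_add]; ring_nf
            rw [this]; simp only [mul_assoc]

lemma nf_simp_set (hcen : ∀ g : G, Commute c g)
    (hswap : ∀ q p : ℤ, Y ^ q * X ^ p = X ^ p * Y ^ q * c ^ (-(q * p))) :
    (∀ (q p : ℤ) (h : G), Y ^ q * (X ^ p * h) = X ^ p * (Y ^ q * (c ^ (-(q * p)) * h)))
    ∧ (∀ (k m : ℤ) (h : G), c ^ k * (X ^ m * h) = X ^ m * (c ^ k * h))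
    ∧ (∀ (k m : ℤ), c ^ k * X ^ m = X ^ m * c ^ k)
    ∧ (∀ (k m : ℤ) (h : G), c ^ k * (Y ^ m * h) = Y ^ m * (c ^ k * h))
    ∧ (∀ (k m : ℤ), c ^ k * Y ^ m = Y ^ m * c ^ k) := by
  refine ⟨fun q p h => ?_, fun k m h => ?_, fun k m => ?_, fun k m h => ?_, fun k m => ?_⟩
  · rw [← mul_assoc, hswap, mul_assoc, mul_assoc]
  · rw [← mul_assoc, ((hcen (X ^ m)).zpow_left k).eq, mul_assoc]
  · exact ((hcen (X ^ m)).zpow_left k).eq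
  · rw [← mul_assoc, ((hcen (Y ^ m)).zpow_left k).eq, mul_assoc]
  · exact ((hcen (Y ^ m)).zpow_left k).eq

lemma nf_mul (hcen : ∀ g : G, Commute c g)
    (hswap : ∀ q p : ℤ, Y ^ q * X ^ p = X ^ p * Y ^ q * c ^ (-(q * p)))
    (p q r p' q' r' : ℤ) :
    (X ^ p * Y ^ q * c ^ r) * (X ^ p' * Y ^ q' * c ^ r') =
      X ^ (p + p') * Y ^ (q + q') * c ^ (r + r' - q * p') := by
  obtain ⟨h1, h2, h3, h4, h5⟩ := nf_simp_set hcen hswap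
  have hX : ∀ (m n : ℤ) (h : G), X ^ m * (X ^ n * h) = X ^ (m + n) * h := by
    intro m n h; rw [← mul_assoc, ← zpow_add]
  have hY : ∀ (m n : ℤ) (h : G), Y ^ m * (Y ^ n * h) = Y ^ (m + n) * h := by
    intro m n h; rw [← mul_assoc, ← zpow_add]
  have hC : ∀ (m n : ℤ), c ^ m * c ^ n = c ^ (m + n) := fun m n => (zpow_add c m n).symm
  simp only [mul_assoc, h1, h2, h3, h4, h5, hX, hY, hC]
  ring_nf

end NF

end Aux

/-- For nonzero integers `a`, `b`, the unitriangular matrices `A`, `B` determine a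
well-defined injective homomorphism `K₂ → GL₃(ℤ)` with `x₁ ↦ A`, `x₂ ↦ B`. -/
theorem K2_faithful_representation (a b : ℤ) (ha : a ≠ 0) (hb : b ≠ 0)
    (A B : Matrix.GeneralLinearGroup (Fin 3) ℤ)
    (hA : (A : Matrix (Fin 3) (Fin 3) ℤ) = !![1, a, 0; 0, 1, 0; 0, 0, 1])
    (hB : (B : Matrix (Fin 3) (Fin 3) ℤ) = !![1, 0, 0; 0, 1, b; 0, 0, 1]) :
    ∃ f : K 2 →* Matrix.GeneralLinearGroup (Fin 3) ℤ,
      f (xg 0) = A ∧ f (xg 1) = B ∧ Function.Injective f := by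
  have hA' : (A : Matrix (Fin 3) (Fin 3) ℤ) = UT a 0 0 := hA
  have hB' : (B : Matrix (Fin 3) (Fin 3) ℤ) = UT 0 0 b := hB
  -- the lift from the free group
  set φ : FreeGroup (Fin 2) →* GL3 := FreeGroup.lift (![A, B]) with hφ
  have hφ0 : φ (FreeGroup.of 0) = A := by rw [hφ, FreeGroup.lift_apply_of]; rfl
  have hφ1 : φ (FreeGroup.of 1) = B := by rw [hφ, FreeGroup.lift_apply_of]; rfl
  -- every value of φ is unitriangular
  have hUTall : ∀ g : FreeGroup (Fin 2), ∃ x y z : ℤ,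
      ((φ g : GL3) : Matrix (Fin 3) (Fin 3) ℤ) = UT x y z := by
    intro g
    induction g using FreeGroup.induction_on with
    | C1 => exact ⟨0, 0, 0, by rw [map_one]; exact UT_one.symm ▸ by simp [UT_one]⟩
    | of i =>
        fin_cases i
        · refine ⟨a, 0, 0, ?_⟩
          show ((φ (FreeGroup.of 0) : GL3) : Matrix (Fin 3) (Fin 3) ℤ) = UT a 0 0
          rw [hφ0]; exact hA'
        · refine ⟨0, 0, b, ?_⟩
          show ((φ (FreeGroup.of 1) : GL3) : Matrix (Fin 3) (Fin 3) ℤ) = UT 0 0 b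
          rw [hφ1]; exact hB'
    | inv_of i hi =>
        obtain ⟨x, y, z, hxyz⟩ := hi
        exact ⟨-x, x*z-y, -z, by rw [map_inv]; exact coe_inv_UT hxyz⟩
    | mul u v hu hv =>
        obtain ⟨x, y, z, hxyz⟩ := hu
        obtain ⟨x', y', z', hxyz'⟩ := hv
        exact ⟨x+x', y'+y+x*z', z+z', by
          rw [map_mul, Units.val_mul, hxyz, hxyz', UT_mul]⟩
  -- the relators die
  have hker : ∀ w ∈ Subgroup.normalClosure (reducedRels 2), φ w = 1 := by
    have hsub : reducedRels 2 ⊆ (MonoidHom.ker φ : Set (FreeGroup (Fin 2))) := by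
      rintro x ⟨i, g, rfl⟩
      rw [SetLike.mem_coe, MonoidHom.mem_ker, map_pcomm, map_mul, map_mul, map_inv]
      obtain ⟨x, y, z, hxyz⟩ := hUTall g
      apply pcomm_eq_one_of_comm
      fin_cases i
      · exact key_comm (U := φ (FreeGroup.of 0)) (by rw [hφ0]; exact hA') hxyz
      · exact key_comm (U := φ (FreeGroup.of 1)) (by rw [hφ1]; exact hB') hxyz
    intro w hw
    exact MonoidHom.mem_ker.mp (Subgroup.normalClosure_le_normal hsub hw)
  -- the homomorphism on the quotient
  refine ⟨QuotientGroup.lift _ φ hker, ?_, ?_, ?_⟩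
  · exact hφ0
  · exact hφ1
  set f : K 2 →* GL3 := QuotientGroup.lift _ φ hker with hf
  -- basic elements of K 2
  set X : K 2 := xg 0 with hXdef
  set Y : K 2 := xg 1 with hYdef
  set c : K 2 := X⁻¹ * Y⁻¹ * X * Y with hcdef
  have hfX : f X = A := hφ0
  have hfY : f Y = B := hφ1
  -- relations in K 2
  have hrel : ∀ (i : Fin 2) (g : FreeGroup (Fin 2)),
      pcomm (xg i) ((QuotientGroup.mk g : K 2)⁻¹ * xg i * (QuotientGroup.mk g)) = 1 := by
    intro i g
    have hmem : pcomm (FreeGroup.of i) (g⁻¹ * FreeGroup.of i * g) ∈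
        Subgroup.normalClosure (reducedRels 2) :=
      Subgroup.subset_normalClosure ⟨i, g, rfl⟩
    have h1 : (QuotientGroup.mk (pcomm (FreeGroup.of i) (g⁻¹ * FreeGroup.of i * g)) : K 2)
        = 1 := (QuotientGroup.eq_one_iff _).2 hmem
    simp only [pcomm, QuotientGroup.mk_mul, QuotientGroup.mk_inv] at h1
    simp only [pcomm]
    exact h1
  have hcomm0 : X * (Y⁻¹ * X * Y) = (Y⁻¹ * X * Y) * X := by
    have := hrel 0 (FreeGroup.of 1)
    exact comm_of_pcomm this
  have hcomm1 : Y * (X⁻¹ * Y * X) = (X⁻¹ * Y * X) * Y := by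
    have := hrel 1 (FreeGroup.of 0)
    exact comm_of_pcomm this
  -- c commutes with X and Y
  have hcX : Commute c X := by
    have e1 : X * c = Y⁻¹ * X * Y := by rw [hcdef]; group
    have e2 : c * X = X⁻¹ * (X * (Y⁻¹ * X * Y)) := by
      rw [hcomm0, hcdef]; group
    show c * X = X * c
    rw [e2, e1]; group
  have hcY : Commute c Y := by
    have h' : Y * pcomm Y X = pcomm Y X * Y := by
      have e1 : Y * pcomm Y X = X⁻¹ * Y * X := by rw [pcomm]; group
      have e2 : pcomm Y X * Y = Y⁻¹ * (Y * (X⁻¹ * Y * X)) := by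
        rw [hcomm1, pcomm]; group
      rw [e1, e2]; group
    have hcinv : c = (pcomm Y X)⁻¹ := by rw [pcomm, hcdef]; group
    have hYw : Commute Y (pcomm Y X) := h'
    rw [hcinv]
    exact hYw.symm.inv_left
  -- c is central
  have hcen : ∀ u : K 2, Commute c u := by
    intro u
    induction u using QuotientGroup.induction_on with
    | H g =>
        induction g using FreeGroup.induction_on with
        | C1 => simpa using Commute.one_right c
        | of i =>
            fin_cases i
            · exact hcX
            · exact hcY
        | inv_of i hi => simp only [QuotientGroup.mk_inv]; exact hi.inv_right
        | mul u v hu hv =>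
            have : (QuotientGroup.mk (u * v) : K 2)
                = QuotientGroup.mk u * QuotientGroup.mk v := rfl
            rw [this]
            exact hu.mul_right hv
  have hcen' : ∀ u : K 2, Commute c u := hcen
  have hswap := nf_swap_pq (c := c) hcdef hcen'
  -- normal form
  have hnf : ∀ u : K 2, ∃ p q r : ℤ, u = X ^ p * Y ^ q * c ^ r := by
    intro u
    induction u using QuotientGroup.induction_on with
    | H g =>
        induction g using FreeGroup.induction_on with
        | C1 => exact ⟨0, 0, 0, by simp⟩
        | of i =>
            fin_cases i
            · exact ⟨1, 0, 0, by simp [hXdef]; rfl⟩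
            · exact ⟨0, 1, 0, by simp [hYdef]; rfl⟩
        | inv_of i hi =>
            fin_cases i
            · exact ⟨-1, 0, 0, by simp [hXdef]; rfl⟩
            · exact ⟨0, -1, 0, by simp [hYdef]; rfl⟩
        | mul u v hu hv =>
            obtain ⟨p, q, r, h1⟩ := hu
            obtain ⟨p', q', r', h2⟩ := hv
            refine ⟨p + p', q + q', r + r' - q * p', ?_⟩
            have : (QuotientGroup.mk (u * v) : K 2)
                = QuotientGroup.mk u * QuotientGroup.mk v := rfl
            rw [this, h1, h2, nf_mul hcen' hswap]
  -- the commutator in GL3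
  set C : GL3 := A⁻¹ * B⁻¹ * A * B with hCdef
  have hfc : f c = C := by
    rw [hcdef, hCdef]
    simp only [map_mul, map_inv, hfX, hfY]
  have hC' : (C : Matrix (Fin 3) (Fin 3) ℤ) = UT 0 (a*b) 0 := by
    rw [hCdef]
    push_cast
    rw [hA', hB', UT_inv, UT_inv]
    simp only [UT_mul]
    ring_nf
  -- injectivity
  refine (injective_iff_map_eq_one f).2 ?_
  intro u hu
  obtain ⟨p, q, r, rfl⟩ := hnf u
  rw [map_mul, map_mul, map_zpow, map_zpow, map_zpow, hfX, hfY, hfc] at hu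
  have hu' : ((A ^ p * B ^ q * C ^ r : GL3) : Matrix (Fin 3) (Fin 3) ℤ)
      = (1 : Matrix (Fin 3) (Fin 3) ℤ) := by rw [hu]; simp
  rw [Units.val_mul, Units.val_mul, coe_zpow_row hA', coe_zpow_mid hB',
    coe_zpow_row hC', UT_mul, UT_mul, ← UT_one] at hu'
  obtain ⟨e1, e2, e3⟩ := UT_eq_iff hu'
  have hp : p = 0 := by
    have h1 : p * a = 0 := by linarith
    rcases mul_eq_zero.1 h1 with h | h
    · exact h
    · exact absurd h ha
  have hq : q = 0 := by
    have h1 : q * b = 0 := by linarith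
    rcases mul_eq_zero.1 h1 with h | h
    · exact h
    · exact absurd h hb
  have hr : r = 0 := by
    rw [hp, hq] at e2
    ring_nf at e2
    have h1 : r * (a * b) = 0 := by linarith
    rcases mul_eq_zero.1 h1 with h | h
    · exact h
    · rcases mul_eq_zero.1 h with h2 | h2
      · exact absurd h2 ha
      · exact absurd h2 hb
  rw [hp, hq, hr]
  simp
end

section
/- In the reduced free group K₂ on generators x₁, x₂, the commutator [x₂, x₁] is central; consequently K₂ is nilpotent of class at most 2. -/
set_option linter.unnecessarySimpa false
open scoped commutatorElement

/-- In `K_n`, each generator commutes with all of its conjugates. -/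
lemma xg_comm_conj {n : ℕ} (i : Fin n) (h : K n) :
    Commute (xg i) (h⁻¹ * xg i * h) := by
  obtain ⟨g, rfl⟩ := QuotientGroup.mk_surjective h
  have hmem : pcomm (FreeGroup.of i) (g⁻¹ * FreeGroup.of i * g) ∈
      Subgroup.normalClosure (reducedRels n) :=
    Subgroup.subset_normalClosure ⟨i, g, rfl⟩
  have h1 : (QuotientGroup.mk (pcomm (FreeGroup.of i) (g⁻¹ * FreeGroup.of i * g)) : K n) = 1 :=
    (QuotientGroup.eq_one_iff _).mpr hmem
  have h2 : pcomm (xg i) ((QuotientGroup.mk g : K n)⁻¹ * xg i * QuotientGroup.mk g) = 1 := by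
    simpa [pcomm, xg] using h1
  have h3 : ⁅(xg i)⁻¹, ((QuotientGroup.mk g : K n)⁻¹ * xg i * QuotientGroup.mk g)⁻¹⁆ = 1 := by
    rw [commutatorElement_def, inv_inv, inv_inv]
    exact h2
  have h4 := commutatorElement_eq_one_iff_commute.mp h3
  simpa using h4.inv_left.inv_right

/-- The commutator of the two generators of `K 2` is central. -/
lemma pcomm_mem_center : pcomm (xg 1) (xg 0) ∈ Subgroup.center (K 2) := by
  have h0 : Commute (pcomm (xg (1 : Fin 2)) (xg 0)) (xg 0) := by
    have h := (xg_comm_conj (0 : Fin 2) (xg 1)).inv_right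
    have h' : Commute (xg (0 : Fin 2)) ((xg 1)⁻¹ * (xg 0)⁻¹ * xg 1) := by
      have e : ((xg (1 : Fin 2))⁻¹ * xg 0 * xg 1)⁻¹ = (xg 1)⁻¹ * (xg 0)⁻¹ * xg 1 := by group
      rwa [e] at h
    have h'' := (h'.mul_right (Commute.refl (xg (0 : Fin 2)))).symm
    have e : (xg (1 : Fin 2))⁻¹ * (xg 0)⁻¹ * xg 1 * xg 0 = pcomm (xg 1) (xg 0) := by
      unfold pcomm; group
    rwa [e] at h''
  have h1 : Commute (pcomm (xg (1 : Fin 2)) (xg 0)) (xg 1) := by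
    have h := xg_comm_conj (1 : Fin 2) (xg 0)
    have h'' := ((Commute.refl (xg (1 : Fin 2))).inv_right.mul_right h).symm
    have e : (xg (1 : Fin 2))⁻¹ * ((xg 0)⁻¹ * xg 1 * xg 0) = pcomm (xg 1) (xg 0) := by
      unfold pcomm; group
    rwa [e] at h''
  rw [Subgroup.mem_center_iff]
  intro g
  suffices h : Commute (pcomm (xg 1) (xg 0)) g from h.symm.eq
  obtain ⟨w, rfl⟩ := QuotientGroup.mk_surjective g
  induction w using FreeGroup.induction_on with
  | C1 => simpa using Commute.one_right _
  | of x =>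
      fin_cases x
      · exact h0
      · exact h1
  | inv_of x ih => simpa using ih.inv_right
  | mul x y ihx ihy =>
      have e : (QuotientGroup.mk (x * y) : K 2) = QuotientGroup.mk x * QuotientGroup.mk y := rfl
      rw [e]
      exact ihx.mul_right ihy

lemma gen_comm_mem_center (i j : Fin 2) : ⁅xg i, xg j⁆ ∈ Subgroup.center (K 2) := by
  have hc := pcomm_mem_center
  have h10 : ⁅xg (1 : Fin 2), xg 0⁆ ∈ Subgroup.center (K 2) := by
    have : ⁅xg (1 : Fin 2), xg 0⁆ =
        (xg (1 : Fin 2) * xg 0) * pcomm (xg 1) (xg 0) * (xg (1 : Fin 2) * xg 0)⁻¹ := by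
      unfold pcomm; rw [commutatorElement_def]; group
    rw [this]
    exact Subgroup.Normal.conj_mem inferInstance _ hc _
  fin_cases i <;> fin_cases j
  · simp only [commutatorElement_def]
    group
    exact Subgroup.one_mem _
  · show ⁅xg (0 : Fin 2), xg (1 : Fin 2)⁆ ∈ Subgroup.center (K 2)
    have : ⁅xg (0 : Fin 2), xg (1 : Fin 2)⁆ = ⁅xg (1 : Fin 2), xg (0 : Fin 2)⁆⁻¹ := by
      rw [commutatorElement_inv]
    rw [this]; exact Subgroup.inv_mem _ h10
  · exact h10
  · simp only [commutatorElement_def]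
    group
    exact Subgroup.one_mem _

lemma comm_mem_center (p q : K 2) : ⁅p, q⁆ ∈ Subgroup.center (K 2) := by
  set Z := Subgroup.center (K 2)
  let π : K 2 →* K 2 ⧸ Z := QuotientGroup.mk' Z
  have key : ∀ a b : K 2, Commute (π a) (π b) → ⁅a, b⁆ ∈ Z := by
    intro a b h
    rw [← QuotientGroup.ker_mk' Z, MonoidHom.mem_ker, map_commutatorElement]
    exact commutatorElement_eq_one_iff_commute.mpr h
  apply key
  have base : ∀ i j : Fin 2, Commute (π (xg i)) (π (xg j)) := by
    intro i j
    rw [← commutatorElement_eq_one_iff_commute, ← map_commutatorElement]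
    exact (QuotientGroup.eq_one_iff _).mpr (gen_comm_mem_center i j)
  clear key
  have gen : ∀ a : K 2, ∀ j : Fin 2, Commute (π a) (π (xg j)) := by
    intro a j
    obtain ⟨w, rfl⟩ := QuotientGroup.mk_surjective a
    induction w using FreeGroup.induction_on with
    | C1 => simpa using Commute.one_left _
    | of x => exact base x j
    | inv_of x ih => simpa using ih.inv_left
    | mul x y ihx ihy =>
        have : (QuotientGroup.mk (x * y) : K 2) = QuotientGroup.mk x * QuotientGroup.mk y := rfl
        rw [this, map_mul]
        exact ihx.mul_left ihy
  obtain ⟨w, rfl⟩ := QuotientGroup.mk_surjective q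
  induction w using FreeGroup.induction_on with
  | C1 => simpa using Commute.one_right _
  | of x => exact gen p x
  | inv_of x ih => simpa using ih.inv_right
  | mul x y ihx ihy =>
      have : (QuotientGroup.mk (x * y) : K 2) = QuotientGroup.mk x * QuotientGroup.mk y := rfl
      rw [this, map_mul]
      exact ihx.mul_right ihy

/-- In `K₂` the commutator `[x₂, x₁]` is central, and `K₂` is nilpotent of class
at most `2`. -/
theorem K2_commutator_central_and_nilpotent :
    (∀ g : K 2, g * pcomm (xg 1) (xg 0) = pcomm (xg 1) (xg 0) * g) ∧
    (⊤ : Subgroup (K 2)).lowerCentralSeries 2 = ⊥ := by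
  constructor
  · intro g
    exact Subgroup.mem_center_iff.mp pcomm_mem_center g
  · have hle : (⊤ : Subgroup (K 2)).lowerCentralSeries 1 ≤ Subgroup.center (K 2) := by
      rw [Subgroup.top_lowerCentralSeries_one]
      rw [commutator_def]
      rw [Subgroup.commutator_le]
      intro p _ q _
      exact comm_mem_center p q
    exact Subgroup.lowerCentralSeries_succ_eq_bot _ hle
end

section
/- In the reduced free group K₂ on generators x₁, x₂, writing z = [x₂, x₁], the map ℤ³ → K₂ given by (α, β, γ) ↦ x₁^α x₂^β z^γ is a bijection; that is, every element of K₂ has a unique presentation of the form x₁^α x₂^β [x₂,x₁]^γ with α, β, γ ∈ ℤ. -/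
lemma commute_of_pcomm {G : Type*} [Group G] {x y : G} (h : pcomm x y = 1) : Commute x y := by
  have : x * y = y * x * pcomm x y := by unfold pcomm; group
  rw [h, mul_one] at this
  exact this

/-- The discrete Heisenberg group, a concrete model for `K 2`. -/
@[ext] structure Hei where
  a : ℤ
  b : ℤ
  c : ℤ

namespace Hei

instance : Mul Hei := ⟨fun p q => ⟨p.a + q.a, p.b + q.b, p.c + q.c + p.b * q.a⟩⟩
instance : One Hei := ⟨⟨0, 0, 0⟩⟩
instance : Inv Hei := ⟨fun p => ⟨-p.a, -p.b, -p.c + p.a * p.b⟩⟩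

@[simp] lemma mul_a (p q : Hei) : (p * q).a = p.a + q.a := rfl
@[simp] lemma mul_b (p q : Hei) : (p * q).b = p.b + q.b := rfl
@[simp] lemma mul_c (p q : Hei) : (p * q).c = p.c + q.c + p.b * q.a := rfl
@[simp] lemma one_a : (1 : Hei).a = 0 := rfl
@[simp] lemma one_b : (1 : Hei).b = 0 := rfl
@[simp] lemma one_c : (1 : Hei).c = 0 := rfl
@[simp] lemma inv_a (p : Hei) : (p⁻¹).a = -p.a := rfl
@[simp] lemma inv_b (p : Hei) : (p⁻¹).b = -p.b := rfl
@[simp] lemma inv_c (p : Hei) : (p⁻¹).c = -p.c + p.a * p.b := rfl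

instance : Group Hei where
  mul_assoc p q r := by ext <;> simp <;> ring
  one_mul p := by ext <;> simp
  mul_one p := by ext <;> simp
  inv_mul_cancel p := by ext <;> simp <;> ring

lemma pcomm_conj (v w : Hei) : pcomm v (w⁻¹ * v * w) = 1 := by
  ext <;> simp [pcomm] <;> ring

lemma xpow (n : ℤ) : (⟨1,0,0⟩ : Hei) ^ n = ⟨n, 0, 0⟩ := by
  induction n using Int.induction_on with
  | zero => rfl
  | succ i ih => rw [zpow_add_one, ih]; ext <;> simp
  | pred i ih => rw [zpow_sub_one, ih]; ext <;> simp <;> ring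

lemma ypow (n : ℤ) : (⟨0,1,0⟩ : Hei) ^ n = ⟨0, n, 0⟩ := by
  induction n using Int.induction_on with
  | zero => rfl
  | succ i ih => rw [zpow_add_one, ih]; ext <;> simp
  | pred i ih => rw [zpow_sub_one, ih]; ext <;> simp <;> ring

lemma zpow3 (n : ℤ) : (⟨0,0,1⟩ : Hei) ^ n = ⟨0, 0, n⟩ := by
  induction n using Int.induction_on with
  | zero => rfl
  | succ i ih => rw [zpow_add_one, ih]; ext <;> simp
  | pred i ih => rw [zpow_sub_one, ih]; ext <;> simp <;> ring

end Hei

/-- The homomorphism from the free group on two generators to the Heisenberg group. -/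
noncomputable def phiF : FreeGroup (Fin 2) →* Hei :=
  FreeGroup.lift ![⟨1,0,0⟩, ⟨0,1,0⟩]

/-- The induced homomorphism `K 2 →* Hei`. -/
noncomputable def phi : K 2 →* Hei :=
  QuotientGroup.lift _ phiF (by
    intro x hx
    refine Subgroup.normalClosure_le_normal ?_ hx
    rintro r ⟨i, g, rfl⟩
    rw [SetLike.mem_coe, MonoidHom.mem_ker, map_pcomm]
    simp only [map_mul, map_inv]
    exact Hei.pcomm_conj _ _)

@[simp] lemma phi_x : phi (xg 0) = (⟨1,0,0⟩ : Hei) := by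
  show phiF (FreeGroup.of 0) = _
  simp [phiF]

@[simp] lemma phi_y : phi (xg 1) = (⟨0,1,0⟩ : Hei) := by
  show phiF (FreeGroup.of 1) = _
  simp [phiF]

/-! ### Commutation lemmas in `K n` -/

lemma comm_conj {n : ℕ} (i : Fin n) (g : FreeGroup (Fin n)) :
    Commute (xg i) ((QuotientGroup.mk g : K n)⁻¹ * xg i * QuotientGroup.mk g) := by
  apply commute_of_pcomm
  have h1 : ((QuotientGroup.mk (pcomm (FreeGroup.of i) (g⁻¹ * FreeGroup.of i * g)) : K n)) = 1 := by
    rw [QuotientGroup.eq_one_iff]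
    exact Subgroup.subset_normalClosure ⟨i, g, rfl⟩
  rw [show (QuotientGroup.mk (pcomm (FreeGroup.of i) (g⁻¹ * FreeGroup.of i * g)) : K n)
      = pcomm (xg i) ((QuotientGroup.mk g : K n)⁻¹ * xg i * QuotientGroup.mk g) from by
    simp [pcomm, xg, QuotientGroup.mk_mul, QuotientGroup.mk_inv]] at h1
  exact h1

section K2

local notation "x" => (xg 0 : K 2)
local notation "y" => (xg 1 : K 2)
local notation "z" => (pcomm (xg 1) (xg 0) : K 2)

lemma hxz : Commute x z := by
  have h : z = ((xg 1)⁻¹ * xg 0 * xg 1)⁻¹ * xg 0 := by unfold pcomm; group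
  rw [h]
  exact ((comm_conj 0 (FreeGroup.of 1)).inv_right).mul_right (Commute.refl _)

lemma hyz : Commute y z := by
  have h : z = (xg 1)⁻¹ * ((xg 0)⁻¹ * xg 1 * xg 0) := by unfold pcomm; group
  rw [h]
  exact ((Commute.refl _).inv_right).mul_right (comm_conj 1 (FreeGroup.of 0))

lemma yx : y * x = x * y * z := by unfold pcomm; group

lemma yinvx : y⁻¹ * x = x * y⁻¹ * z⁻¹ := by
  apply mul_left_cancel (a := y)
  calc y * (y⁻¹ * x) = x := by group
    _ = x * y * (y⁻¹ * z) * z⁻¹ := by group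
    _ = x * y * (z * y⁻¹) * z⁻¹ := by rw [hyz.inv_left.eq]
    _ = (x * y * z) * (y⁻¹ * z⁻¹) := by group
    _ = (y * x) * (y⁻¹ * z⁻¹) := by rw [← yx]
    _ = y * (x * y⁻¹ * z⁻¹) := by group

lemma swapb (b : ℤ) : y ^ b * x = x * y ^ b * z ^ b := by
  induction b using Int.induction_on with
  | zero => simp
  | succ i ih =>
    calc y ^ ((i : ℤ) + 1) * x = y ^ (i : ℤ) * (y * x) := by rw [zpow_add_one]; group
      _ = y ^ (i : ℤ) * (x * y * z) := by rw [yx]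
      _ = (y ^ (i : ℤ) * x) * (y * z) := by group
      _ = (x * y ^ (i : ℤ) * z ^ (i : ℤ)) * (y * z) := by rw [ih]
      _ = x * y ^ (i : ℤ) * (z ^ (i : ℤ) * y) * z := by group
      _ = x * y ^ (i : ℤ) * (y * z ^ (i : ℤ)) * z := by rw [← (hyz.zpow_right (i : ℤ)).eq]
      _ = x * y ^ ((i : ℤ) + 1) * z ^ ((i : ℤ) + 1) := by rw [zpow_add_one, zpow_add_one]; group
  | pred i ih =>
    calc y ^ (-(i : ℤ) - 1) * x = y ^ (-(i : ℤ)) * (y⁻¹ * x) := by rw [zpow_sub_one]; group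
      _ = y ^ (-(i : ℤ)) * (x * y⁻¹ * z⁻¹) := by rw [yinvx]
      _ = (y ^ (-(i : ℤ)) * x) * (y⁻¹ * z⁻¹) := by group
      _ = (x * y ^ (-(i : ℤ)) * z ^ (-(i : ℤ))) * (y⁻¹ * z⁻¹) := by rw [ih]
      _ = x * y ^ (-(i : ℤ)) * (z ^ (-(i : ℤ)) * y⁻¹) * z⁻¹ := by group
      _ = x * y ^ (-(i : ℤ)) * (y⁻¹ * z ^ (-(i : ℤ))) * z⁻¹ := by
            rw [← ((hyz.zpow_right (-(i : ℤ))).inv_left).eq]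
      _ = x * y ^ (-(i : ℤ) - 1) * z ^ (-(i : ℤ) - 1) := by
            rw [zpow_sub_one, zpow_sub_one]; group

lemma swapbinv (b : ℤ) : y ^ b * x⁻¹ = x⁻¹ * y ^ b * z ^ (-b) := by
  apply mul_right_cancel (b := x)
  calc y ^ b * x⁻¹ * x = y ^ b := by group
    _ = x⁻¹ * (x * y ^ b * z ^ b) * z ^ (-b) := by group
    _ = x⁻¹ * (y ^ b * x) * z ^ (-b) := by rw [← swapb]
    _ = x⁻¹ * y ^ b * (x * z ^ (-b)) := by group
    _ = x⁻¹ * y ^ b * (z ^ (-b) * x) := by rw [(hxz.zpow_right (-b)).eq]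
    _ = x⁻¹ * y ^ b * z ^ (-b) * x := by group

lemma Fmulx (a b c : ℤ) :
    (x ^ a * y ^ b * z ^ c) * x = x ^ (a + 1) * y ^ b * z ^ (b + c) := by
  calc (x ^ a * y ^ b * z ^ c) * x = x ^ a * y ^ b * (z ^ c * x) := by group
    _ = x ^ a * y ^ b * (x * z ^ c) := by rw [← (hxz.zpow_right c).eq]
    _ = x ^ a * (y ^ b * x) * z ^ c := by group
    _ = x ^ a * (x * y ^ b * z ^ b) * z ^ c := by rw [swapb]
    _ = x ^ (a + 1) * y ^ b * z ^ (b + c) := by rw [zpow_add_one, zpow_add]; group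

lemma Fmulxinv (a b c : ℤ) :
    (x ^ a * y ^ b * z ^ c) * x⁻¹ = x ^ (a - 1) * y ^ b * z ^ (c - b) := by
  calc (x ^ a * y ^ b * z ^ c) * x⁻¹ = x ^ a * y ^ b * (z ^ c * x⁻¹) := by group
    _ = x ^ a * y ^ b * (x⁻¹ * z ^ c) := by rw [← ((hxz.zpow_right c).inv_left).eq]
    _ = x ^ a * (y ^ b * x⁻¹) * z ^ c := by group
    _ = x ^ a * (x⁻¹ * y ^ b * z ^ (-b)) * z ^ c := by rw [swapbinv]
    _ = x ^ (a - 1) * y ^ b * z ^ (c - b) := by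
          rw [zpow_sub_one, show c - b = -b + c from by ring, zpow_add]; group

lemma Fmuly (a b c : ℤ) :
    (x ^ a * y ^ b * z ^ c) * y = x ^ a * y ^ (b + 1) * z ^ c := by
  calc (x ^ a * y ^ b * z ^ c) * y = x ^ a * y ^ b * (z ^ c * y) := by group
    _ = x ^ a * y ^ b * (y * z ^ c) := by rw [← (hyz.zpow_right c).eq]
    _ = x ^ a * y ^ (b + 1) * z ^ c := by rw [zpow_add_one]; group

lemma Fmulyinv (a b c : ℤ) :
    (x ^ a * y ^ b * z ^ c) * y⁻¹ = x ^ a * y ^ (b - 1) * z ^ c := by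
  calc (x ^ a * y ^ b * z ^ c) * y⁻¹ = x ^ a * y ^ b * (z ^ c * y⁻¹) := by group
    _ = x ^ a * y ^ b * (y⁻¹ * z ^ c) := by rw [← ((hyz.zpow_right c).inv_left).eq]
    _ = x ^ a * y ^ (b - 1) * z ^ c := by rw [zpow_sub_one]; group

lemma phi_form (a b c : ℤ) :
    phi (x ^ a * y ^ b * z ^ c) = (⟨a, b, c⟩ : Hei) := by
  have hz : phi z = (⟨0,0,1⟩ : Hei) := by
    rw [map_pcomm, phi_x, phi_y]
    ext <;> simp [pcomm] <;> ring
  rw [map_mul, map_mul, map_zpow, map_zpow, map_zpow, phi_x, phi_y, hz,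
      Hei.xpow, Hei.ypow, Hei.zpow3]
  ext <;> simp

end K2

/-- Unique normal form in `K₂`: the map `(α, β, γ) ↦ x₁^α x₂^β [x₂,x₁]^γ` is a
bijection `ℤ³ → K₂`. -/
theorem K2_normal_form :
    Function.Bijective (fun p : ℤ × ℤ × ℤ =>
      (xg 0 : K 2) ^ p.1 * (xg 1 : K 2) ^ p.2.1 * (pcomm (xg 1) (xg 0) : K 2) ^ p.2.2) := by
  constructor
  · intro p q h
    have h2 := congrArg phi h
    simp only [phi_form] at h2
    obtain ⟨p1, p2, p3⟩ := p
    obtain ⟨q1, q2, q3⟩ := q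
    simp only [Hei.mk.injEq] at h2
    obtain ⟨e1, e2, e3⟩ := h2
    simp [e1, e2, e3]
  · intro k
    obtain ⟨w, rfl⟩ := QuotientGroup.mk_surjective k
    suffices h : ∀ k : K 2, (∃ p : ℤ × ℤ × ℤ,
        (xg 0 : K 2) ^ p.1 * (xg 1 : K 2) ^ p.2.1 * (pcomm (xg 1) (xg 0) : K 2) ^ p.2.2 = k) →
        ∃ p : ℤ × ℤ × ℤ,
        (xg 0 : K 2) ^ p.1 * (xg 1 : K 2) ^ p.2.1 * (pcomm (xg 1) (xg 0) : K 2) ^ p.2.2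
          = k * QuotientGroup.mk w by
      obtain ⟨p, hp⟩ := h 1 ⟨(0, 0, 0), by simp⟩
      exact ⟨p, by simpa using hp⟩
    induction w using FreeGroup.induction_on with
    | C1 => intro k hk; simpa using hk
    | of i =>
      intro k hk
      obtain ⟨⟨a, b, c⟩, rfl⟩ := hk
      fin_cases i
      · exact ⟨(a + 1, b, b + c), (Fmulx a b c).symm⟩
      · exact ⟨(a, b + 1, c), (Fmuly a b c).symm⟩
    | inv_of i _ =>
      intro k hk
      obtain ⟨⟨a, b, c⟩, rfl⟩ := hk
      rw [QuotientGroup.mk_inv]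
      fin_cases i
      · exact ⟨(a - 1, b, c - b), (Fmulxinv a b c).symm⟩
      · exact ⟨(a, b - 1, c), (Fmulyinv a b c).symm⟩
    | mul u v hu hv =>
      intro k hk
      rw [QuotientGroup.mk_mul, ← mul_assoc]
      exact hv _ (hu _ hk)
end

section
/- In the homotopy braid group B̂₃, with b₁₂, b₁₃, b₂₃ the images of σ₁², σ₂σ₁²σ₂^{-1}, σ₂² and z = [b₂₃, b₁₃], the following hold for every integer k: b₁₂^{-k} b₁₃ b₁₂^{k} = b₁₃ z^{k}, b₁₂^{-k} b₂₃ b₁₂^{k} = b₂₃ z^{-k}, and b₁₂^{-k} z b₁₂^{k} = z. -/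
/-- The braid relation `σ₁σ₂σ₁ = σ₂σ₁σ₂` on two generators. -/
def braidRel3 : Set (FreeGroup (Fin 2)) :=
  { FreeGroup.of 0 * FreeGroup.of 1 * FreeGroup.of 0 *
      (FreeGroup.of 1 * FreeGroup.of 0 * FreeGroup.of 1)⁻¹ }

/-- The braid group `B₃`. -/
abbrev B3 := PresentedGroup braidRel3

/-- The generator `σ₁` of `B₃`. -/
def s1 : B3 := PresentedGroup.of 0
/-- The generator `σ₂` of `B₃`. -/
def s2 : B3 := PresentedGroup.of 1
/-- `a₁₂ = σ₁²`. -/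
def a12 : B3 := s1 ^ 2
/-- `a₁₃ = σ₂σ₁²σ₂⁻¹`. -/
def a13 : B3 := s2 * s1 ^ 2 * s2⁻¹
/-- `a₂₃ = σ₂²`. -/
def a23 : B3 := s2 ^ 2

/-- The homotopy relations in `B₃`: `[a₁₃, g⁻¹a₁₃g]` and `[a₂₃, g⁻¹a₂₃g]` for `g`
in the subgroup generated by `a₁₃` and `a₂₃`. -/
def homotopyRels3 : Set B3 :=
  { x | ∃ g ∈ Subgroup.closure {a13, a23},
        x = pcomm a13 (g⁻¹ * a13 * g) ∨ x = pcomm a23 (g⁻¹ * a23 * g) }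

/-- The homotopy braid group `B̂₃`. -/
abbrev HB3 := B3 ⧸ Subgroup.normalClosure homotopyRels3

/-- The canonical projection `B₃ → B̂₃`. -/
def pr : B3 →* HB3 := QuotientGroup.mk' _

/-- The image of `σ₁` in `B̂₃`. -/
def t1 : HB3 := pr s1
/-- The image of `σ₂` in `B̂₃`. -/
def t2 : HB3 := pr s2
/-- The image `b₁₂` of `a₁₂` in `B̂₃`. -/
def b12 : HB3 := pr a12
/-- The image `b₁₃` of `a₁₃` in `B̂₃`. -/
def b13 : HB3 := pr a13
/-- The image `b₂₃` of `a₂₃` in `B̂₃`. -/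
def b23 : HB3 := pr a23
/-- `z = [b₂₃, b₁₃]`. -/
def zz : HB3 := pcomm b23 b13

lemma hb : s1 * s2 * s1 = s2 * s1 * s2 := by
  have h : PresentedGroup.mk braidRel3
      (FreeGroup.of 0 * FreeGroup.of 1 * FreeGroup.of 0 *
        (FreeGroup.of 1 * FreeGroup.of 0 * FreeGroup.of 1)⁻¹) = 1 := by
    apply (QuotientGroup.eq_one_iff _).mpr
    exact Subgroup.subset_normalClosure rfl
  have h2 : s1 * s2 * s1 * (s2 * s1 * s2)⁻¹ = 1 := by
    simpa [s1, s2, PresentedGroup.of, map_mul, map_inv] using h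
  group at h2 ⊢
  exact mul_inv_eq_one.mp h2

lemma hd1 : (s1*s2*s1)*s1 = s2*(s1*s2*s1) := by
  conv_lhs => rw [hb]
  group
lemma hd2 : (s1*s2*s1)*s2 = s1*(s1*s2*s1) := by
  conv_rhs => rw [hb]
  group

lemma hc1 : Commute ((s1*s2*s1)*(s1*s2*s1)) s1 := by
  show _ = _
  calc ((s1*s2*s1)*(s1*s2*s1))*s1 = (s1*s2*s1)*((s1*s2*s1)*s1) := by group
    _ = (s1*s2*s1)*(s2*(s1*s2*s1)) := by rw [hd1]
    _ = ((s1*s2*s1)*s2)*(s1*s2*s1) := by group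
    _ = (s1*(s1*s2*s1))*(s1*s2*s1) := by rw [hd2]
    _ = s1*((s1*s2*s1)*(s1*s2*s1)) := by group

lemma hc2 : Commute ((s1*s2*s1)*(s1*s2*s1)) s2 := by
  show _ = _
  calc ((s1*s2*s1)*(s1*s2*s1))*s2 = (s1*s2*s1)*((s1*s2*s1)*s2) := by group
    _ = (s1*s2*s1)*(s1*(s1*s2*s1)) := by rw [hd2]
    _ = ((s1*s2*s1)*s1)*(s1*s2*s1) := by group
    _ = (s2*(s1*s2*s1))*(s1*s2*s1) := by rw [hd1]
    _ = s2*((s1*s2*s1)*(s1*s2*s1)) := by group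

lemma hceq : a12*a13*a23 = (s1*s2*s1)*(s1*s2*s1) := by
  calc a12*a13*a23 = s1*(s1*s2*s1)*s1*s2 := by rw [a12, a13, a23]; simp only [pow_two]; group
    _ = s1*(s2*s1*s2)*s1*s2 := by rw [hb]
    _ = (s1*s2*s1)*(s2*s1*s2) := by group
    _ = (s1*s2*s1)*(s1*s2*s1) := by rw [← hb]

lemma hcs1 : Commute (a12*a13*a23) s1 := by rw [hceq]; exact hc1
lemma hcs2 : Commute (a12*a13*a23) s2 := by rw [hceq]; exact hc2
lemma hca13 : Commute (a12*a13*a23) a13 :=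
  (hcs2.mul_right (hcs1.pow_right 2)).mul_right hcs2.inv_right
lemma hca23 : Commute (a12*a13*a23) a23 := hcs2.pow_right 2

lemma conj_eq (w : B3) (hw : Commute (a12*a13*a23) w) :
    a12⁻¹ * w * a12 = (a13*a23) * w * (a13*a23)⁻¹ := by
  have h' : (a12*a13*a23)⁻¹ * w * (a12*a13*a23) = w := by
    rw [hw.inv_left.eq]; group
  calc a12⁻¹*w*a12
      = (a13*a23) * ((a12*a13*a23)⁻¹ * w * (a12*a13*a23)) * (a13*a23)⁻¹ := by group
    _ = (a13*a23) * w * (a13*a23)⁻¹ := by rw [h']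

lemma pr_rel {x : B3} (hx : x ∈ homotopyRels3) : pr x = 1 := by
  apply (QuotientGroup.eq_one_iff _).mpr
  exact Subgroup.subset_normalClosure hx

lemma pcomm_one {G : Type*} [Group G] {u v : G} (h : pcomm u v = 1) : Commute u v := by
  have h' : u⁻¹ * v⁻¹ * u * v = 1 := h
  have h2 : u * (u⁻¹ * v⁻¹ * u * v) = u * 1 := by rw [h']
  show u * v = v * u
  calc u * v = v * (u * (u⁻¹ * v⁻¹ * u * v)) := by group
    _ = v * (u * 1) := by rw [h2]
    _ = v * u := by group

lemma comm1 : Commute b13 (b23⁻¹ * b13 * b23) := by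
  have hx : pcomm a13 (a23⁻¹ * a13 * a23) ∈ homotopyRels3 :=
    ⟨a23, Subgroup.subset_closure (by simp), Or.inl rfl⟩
  have := pr_rel hx
  apply pcomm_one
  simpa [pcomm, b13, b23, map_mul, map_inv] using this

lemma comm2 : Commute b23 (b13⁻¹ * b23 * b13) := by
  have hx : pcomm a23 (a13⁻¹ * a23 * a13) ∈ homotopyRels3 :=
    ⟨a13, Subgroup.subset_closure (by simp), Or.inr rfl⟩
  have := pr_rel hx
  apply pcomm_one
  simpa [pcomm, b13, b23, map_mul, map_inv] using this

lemma hzz : zz = b23⁻¹ * b13⁻¹ * b23 * b13 := rfl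

lemma hz13 : Commute b13 zz := by
  have : zz = (b23⁻¹ * b13 * b23)⁻¹ * b13 := by rw [hzz]; group
  rw [this]
  exact comm1.inv_right.mul_right (Commute.refl b13)

lemma hz23 : Commute b23 zz := by
  have : zz⁻¹ = (b13⁻¹ * b23 * b13)⁻¹ * b23 := by rw [hzz]; group
  have h : Commute b23 zz⁻¹ := by
    rw [this]; exact comm2.inv_right.mul_right (Commute.refl b23)
  simpa using h.inv_right

lemma hconj13 : b23 * b13 * b23⁻¹ = b13 * zz := by
  calc b23*b13*b23⁻¹ = b13 * b23 * (b23⁻¹*b13⁻¹*b23*b13) * b23⁻¹ := by group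
    _ = b13 * (b23 * zz) * b23⁻¹ := by rw [hzz]; group
    _ = b13 * (zz * b23) * b23⁻¹ := by rw [hz23.eq]
    _ = b13 * zz := by group

lemma hconj23 : b13 * b23 * b13⁻¹ = b23 * zz⁻¹ := by
  have e : b23 * b13 = b13 * b23 * zz := by
    calc b23 * b13 = (b23 * b13 * b23⁻¹) * b23 := by group
      _ = b13 * zz * b23 := by rw [hconj13]
      _ = b13 * (zz * b23) := by group
      _ = b13 * (b23 * zz) := by rw [← hz23.eq]
      _ = b13 * b23 * zz := by group
  calc b13*b23*b13⁻¹ = (b13*b23*zz) * zz⁻¹ * b13⁻¹ := by group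
    _ = (b23*b13) * zz⁻¹ * b13⁻¹ := by rw [← e]
    _ = b23 * (b13 * zz⁻¹) * b13⁻¹ := by group
    _ = b23 * (zz⁻¹ * b13) * b13⁻¹ := by rw [hz13.inv_right.eq]
    _ = b23 * zz⁻¹ := by group

lemma transfer (w : B3) (hw : Commute (a12*a13*a23) w) :
    b12⁻¹ * pr w * b12 = (b13 * b23) * pr w * (b13 * b23)⁻¹ := by
  have := congrArg pr (conj_eq w hw)
  simpa [b12, b13, b23, map_mul, map_inv] using this

lemma h1 : b12⁻¹ * b13 * b12 = b13 * zz := by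
  have t := transfer a13 hca13
  calc b12⁻¹ * b13 * b12 = (b13*b23) * b13 * (b13*b23)⁻¹ := t
    _ = b13 * (b23 * b13 * b23⁻¹) * b13⁻¹ := by group
    _ = b13 * (b13 * zz) * b13⁻¹ := by rw [hconj13]
    _ = b13 * b13 * (zz * b13⁻¹) := by group
    _ = b13 * b13 * (b13⁻¹ * zz) := by rw [hz13.inv_left.eq]
    _ = b13 * zz := by group

lemma h2 : b12⁻¹ * b23 * b12 = b23 * zz⁻¹ := by
  have t := transfer a23 hca23
  calc b12⁻¹ * b23 * b12 = (b13*b23) * b23 * (b13*b23)⁻¹ := t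
    _ = b13 * b23 * b13⁻¹ := by group
    _ = b23 * zz⁻¹ := hconj23

lemma hcw : Commute (a12*a13*a23) (pcomm a23 a13) :=
  ((hca23.inv_right.mul_right hca13.inv_right).mul_right hca23).mul_right hca13

lemma pr_zz : pr (pcomm a23 a13) = zz := by
  simp [pcomm, zz, b13, b23, map_mul, map_inv]

lemma h3 : b12⁻¹ * zz * b12 = zz := by
  have t := transfer (pcomm a23 a13) hcw
  rw [pr_zz] at t
  calc b12⁻¹ * zz * b12 = (b13*b23) * zz * (b13*b23)⁻¹ := t
    _ = b13 * (b23 * zz) * b23⁻¹ * b13⁻¹ := by group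
    _ = b13 * (zz * b23) * b23⁻¹ * b13⁻¹ := by rw [hz23.eq]
    _ = (b13 * zz) * b13⁻¹ := by group
    _ = (zz * b13) * b13⁻¹ := by rw [hz13.eq]
    _ = zz := by group

lemma hz12 : Commute b12 zz := by
  show b12 * zz = zz * b12
  calc b12 * zz = b12 * (b12⁻¹ * zz * b12) := by rw [h3]
    _ = zz * b12 := by group

lemma conj_fix {G : Type*} [Group G] {x y : G} (h : Commute x y) : x⁻¹ * y * x = y := by
  calc x⁻¹ * y * x = x⁻¹ * (y * x) := by group
    _ = x⁻¹ * (x * y) := by rw [← h.eq]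
    _ = y := by group

lemma conj_fix' {G : Type*} [Group G] {x y : G} (h : Commute x y) : x * y * x⁻¹ = y := by
  calc x * y * x⁻¹ = (x * y) * x⁻¹ := by group
    _ = (y * x) * x⁻¹ := by rw [h.eq]
    _ = y := by group

lemma h1' : b12 * b13 * b12⁻¹ = b13 * zz⁻¹ := by
  have e : b13 = b12 * b13 * b12⁻¹ * zz := by
    calc b13 = b12 * (b12⁻¹ * b13 * b12) * b12⁻¹ := by group
      _ = b12 * (b13 * zz) * b12⁻¹ := by rw [h1]
      _ = (b12 * b13 * b12⁻¹) * (b12 * zz * b12⁻¹) := by group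
      _ = b12 * b13 * b12⁻¹ * zz := by rw [conj_fix' hz12]
  exact eq_mul_inv_of_mul_eq e.symm

lemma h2' : b12 * b23 * b12⁻¹ = b23 * zz := by
  have e : b23 = b12 * b23 * b12⁻¹ * zz⁻¹ := by
    calc b23 = b12 * (b12⁻¹ * b23 * b12) * b12⁻¹ := by group
      _ = b12 * (b23 * zz⁻¹) * b12⁻¹ := by rw [h2]
      _ = (b12 * b23 * b12⁻¹) * (b12 * zz⁻¹ * b12⁻¹) := by group
      _ = b12 * b23 * b12⁻¹ * zz⁻¹ := by rw [conj_fix' hz12.inv_right]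
  have := eq_mul_inv_of_mul_eq e.symm
  simpa using this

/-- The action of `b₁₂` on `b₁₃`, `b₂₃` and `z` in `B̂₃`. -/
theorem b12_action (k : ℤ) :
    b12 ^ (-k) * b13 * b12 ^ k = b13 * zz ^ k ∧
    b12 ^ (-k) * b23 * b12 ^ k = b23 * zz ^ (-k) ∧
    b12 ^ (-k) * zz * b12 ^ k = zz := by
  have hzk : ∀ m : ℤ, b12⁻¹ * zz ^ m * b12 = zz ^ m :=
    fun m => conj_fix (hz12.zpow_right m)
  have hzk' : ∀ m : ℤ, b12 * zz ^ m * b12⁻¹ = zz ^ m :=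
    fun m => conj_fix' (hz12.zpow_right m)
  induction k using Int.induction_on with
  | zero => simp
  | succ i ih =>
    obtain ⟨ih1, ih2, ih3⟩ := ih
    have e1 : b12 ^ (-((i : ℤ)+1)) = b12⁻¹ * b12 ^ (-(i : ℤ)) := by
      rw [show -((i : ℤ)+1) = -1 + -(i : ℤ) by ring, zpow_add, zpow_neg_one]
    have e2 : b12 ^ ((i : ℤ)+1) = b12 ^ (i : ℤ) * b12 := zpow_add_one b12 i
    refine ⟨?_, ?_, ?_⟩
    · calc b12 ^ (-((i : ℤ)+1)) * b13 * b12 ^ ((i : ℤ)+1)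
          = b12⁻¹ * (b12 ^ (-(i:ℤ)) * b13 * b12 ^ (i:ℤ)) * b12 := by rw [e1, e2]; group
        _ = b12⁻¹ * (b13 * zz ^ (i:ℤ)) * b12 := by rw [ih1]
        _ = (b12⁻¹ * b13 * b12) * (b12⁻¹ * zz ^ (i:ℤ) * b12) := by group
        _ = (b13 * zz) * zz ^ (i:ℤ) := by rw [h1, hzk]
        _ = b13 * (zz ^ (i:ℤ) * zz) := by rw [mul_assoc, ((Commute.refl zz).zpow_right (i:ℤ)).symm.eq]
        _ = b13 * zz ^ ((i:ℤ)+1) := by rw [zpow_add_one]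
    · calc b12 ^ (-((i : ℤ)+1)) * b23 * b12 ^ ((i : ℤ)+1)
          = b12⁻¹ * (b12 ^ (-(i:ℤ)) * b23 * b12 ^ (i:ℤ)) * b12 := by rw [e1, e2]; group
        _ = b12⁻¹ * (b23 * zz ^ (-(i:ℤ))) * b12 := by rw [ih2]
        _ = (b12⁻¹ * b23 * b12) * (b12⁻¹ * zz ^ (-(i:ℤ)) * b12) := by group
        _ = (b23 * zz⁻¹) * zz ^ (-(i:ℤ)) := by rw [h2, hzk]
        _ = b23 * (zz ^ (-(i:ℤ)) * zz⁻¹) := by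
            rw [mul_assoc, (((Commute.refl zz).zpow_right (-(i:ℤ))).inv_left.eq)]
        _ = b23 * zz ^ (-((i:ℤ)+1)) := by
            rw [show -((i : ℤ)+1) = -(i:ℤ) + -1 by ring, zpow_add, zpow_neg_one]
    · calc b12 ^ (-((i : ℤ)+1)) * zz * b12 ^ ((i : ℤ)+1)
          = b12⁻¹ * (b12 ^ (-(i:ℤ)) * zz * b12 ^ (i:ℤ)) * b12 := by rw [e1, e2]; group
        _ = b12⁻¹ * zz * b12 := by rw [ih3]
        _ = zz := h3
  | pred i ih =>
    obtain ⟨ih1, ih2, ih3⟩ := ih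
    have e1 : b12 ^ (-(-(i : ℤ)-1)) = b12 * b12 ^ (-(-(i : ℤ))) := by
      rw [show -(-(i : ℤ)-1) = 1 + -(-(i : ℤ)) by ring, zpow_add, zpow_one]
    have e2 : b12 ^ (-(i : ℤ)-1) = b12 ^ (-(i : ℤ)) * b12⁻¹ := by
      rw [show -(i : ℤ)-1 = -(i:ℤ) + -1 by ring, zpow_add, zpow_neg_one]
    refine ⟨?_, ?_, ?_⟩
    · calc b12 ^ (-(-(i : ℤ)-1)) * b13 * b12 ^ (-(i : ℤ)-1)
          = b12 * (b12 ^ (-(-(i:ℤ))) * b13 * b12 ^ (-(i:ℤ))) * b12⁻¹ := by rw [e1, e2]; group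
        _ = b12 * (b13 * zz ^ (-(i:ℤ))) * b12⁻¹ := by rw [ih1]
        _ = (b12 * b13 * b12⁻¹) * (b12 * zz ^ (-(i:ℤ)) * b12⁻¹) := by group
        _ = (b13 * zz⁻¹) * zz ^ (-(i:ℤ)) := by rw [h1', hzk']
        _ = b13 * (zz ^ (-(i:ℤ)) * zz⁻¹) := by
            rw [mul_assoc, (((Commute.refl zz).zpow_right (-(i:ℤ))).inv_left.eq)]
        _ = b13 * zz ^ (-(i:ℤ)-1) := by
            rw [show -(i : ℤ)-1 = -(i:ℤ) + -1 by ring, zpow_add, zpow_neg_one]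
    · calc b12 ^ (-(-(i : ℤ)-1)) * b23 * b12 ^ (-(i : ℤ)-1)
          = b12 * (b12 ^ (-(-(i:ℤ))) * b23 * b12 ^ (-(i:ℤ))) * b12⁻¹ := by rw [e1, e2]; group
        _ = b12 * (b23 * zz ^ (-(-(i:ℤ)))) * b12⁻¹ := by rw [ih2]
        _ = (b12 * b23 * b12⁻¹) * (b12 * zz ^ (-(-(i:ℤ))) * b12⁻¹) := by group
        _ = (b23 * zz) * zz ^ (-(-(i:ℤ))) := by rw [h2', hzk']
        _ = b23 * (zz ^ (-(-(i:ℤ))) * zz) := by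
            rw [mul_assoc, ((Commute.refl zz).zpow_right (-(-(i:ℤ)))).symm.eq]
        _ = b23 * zz ^ (-(-(i:ℤ)-1)) := by
            rw [show -(-(i : ℤ)-1) = -(-(i:ℤ)) + 1 by ring, zpow_add, zpow_one]
    · calc b12 ^ (-(-(i : ℤ)-1)) * zz * b12 ^ (-(i : ℤ)-1)
          = b12 * (b12 ^ (-(-(i:ℤ))) * zz * b12 ^ (-(i:ℤ))) * b12⁻¹ := by rw [e1, e2]; group
        _ = b12 * zz * b12⁻¹ := by rw [ih3]
        _ = zz := conj_fix' hz12
end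

section
/- Every element of the homotopy braid group B̂₃ can be written in the form b₁₂^α b₁₃^β b₂₃^γ z^δ λ, where α, β, γ, δ ∈ ℤ, z = [b₂₃, b₁₃], and λ belongs to the set Λ₃ = { e, σ₁, σ₂, σ₂σ₁, σ₁σ₂, σ₁σ₂σ₁ } of representatives of the cosets of the pure homotopy braid group P̂₃ in B̂₃. -/
namespace NFaux

/- ### generic lemmas -/

lemma move_inv {G : Type*} [Group G] {t b p : G} (h : t * b = p * t) :
    t * b⁻¹ = p⁻¹ * t := by
  have hb : b = t⁻¹ * (p * t) := by rw [← h]; group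
  rw [hb]; group

lemma comm_of_pcomm {G : Type*} [Group G] {x y : G} (h : x⁻¹ * y⁻¹ * x * y = 1) :
    x * y = y * x := by
  calc x * y = (y * x) * (x⁻¹ * y⁻¹ * x * y) := by group
    _ = y * x := by rw [h, mul_one]

/- ### relations in HB3 -/

lemma pr_rel_one {x : B3} (hx : x ∈ homotopyRels3) : pr x = 1 := by
  rw [pr, QuotientGroup.mk'_apply, QuotientGroup.eq_one_iff]
  exact Subgroup.subset_normalClosure hx

lemma hbrB : s1 * s2 * s1 = s2 * s1 * s2 := by
  have h : PresentedGroup.mk braidRel3 (FreeGroup.of 0 * FreeGroup.of 1 * FreeGroup.of 0 *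
      (FreeGroup.of 1 * FreeGroup.of 0 * FreeGroup.of 1)⁻¹) = 1 := by
    rw [PresentedGroup.mk_eq_one_iff]
    exact Subgroup.subset_normalClosure rfl
  simp only [map_mul, map_inv] at h
  have h2 : s1 * s2 * s1 * (s2 * s1 * s2)⁻¹ = 1 := h
  have := mul_inv_eq_one.mp h2
  exact this

lemma hbr : t1 * t2 * t1 = t2 * t1 * t2 := by
  have := congrArg pr hbrB
  simpa only [map_mul, t1, t2] using this

lemma b12_t : b12 = t1 * t1 := by
  simp [b12, a12, t1, map_pow, pow_two]

lemma b23_t : b23 = t2 * t2 := by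
  simp [b23, a23, t2, map_pow, pow_two]

lemma b13_t : b13 = t2 * (t1 * t1) * t2⁻¹ := by
  simp [b13, a13, t1, t2, map_mul, map_pow, map_inv, pow_two, mul_assoc]

lemma conj1 : t1 * b13 = b23 * t1 := by
  calc t1 * b13 = (t1 * t2 * t1) * (t1 * t2⁻¹) := by rw [b13_t]; group
    _ = (t2 * t1 * t2) * (t1 * t2⁻¹) := by rw [hbr]
    _ = t2 * (t1 * t2 * t1) * t2⁻¹ := by group
    _ = t2 * (t2 * t1 * t2) * t2⁻¹ := by rw [hbr]
    _ = b23 * t1 := by rw [b23_t]; group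

lemma conj1' : t1 * b13 * t1⁻¹ = b23 := by rw [conj1]; group

lemma conj2 : t1 * b23 = b12 * b13 * b12⁻¹ * t1 := by
  calc t1 * b23 = t1 * (t1 * b13 * t1⁻¹) := by rw [conj1']
    _ = b12 * b13 * b12⁻¹ * t1 := by rw [b12_t]; group

lemma conj3 : t2 * b12 = b13 * t2 := by rw [b12_t, b13_t]; group

/- ### homotopy relations: zz commutes with b13 and b23 -/

lemma hrel13 : b13 * (b23⁻¹ * b13 * b23) = (b23⁻¹ * b13 * b23) * b13 := by
  have hm : a23 ∈ Subgroup.closure ({a13, a23} : Set B3) :=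
    Subgroup.subset_closure (by simp)
  have h1 : pr (pcomm a13 (a23⁻¹ * a13 * a23)) = 1 :=
    pr_rel_one ⟨a23, hm, Or.inl rfl⟩
  simp only [pcomm, map_mul, map_inv] at h1
  exact comm_of_pcomm h1

lemma hrel23 : b23 * (b13⁻¹ * b23 * b13) = (b13⁻¹ * b23 * b13) * b23 := by
  have hm : a13 ∈ Subgroup.closure ({a13, a23} : Set B3) :=
    Subgroup.subset_closure (by simp)
  have h1 : pr (pcomm a23 (a13⁻¹ * a23 * a13)) = 1 :=
    pr_rel_one ⟨a13, hm, Or.inr rfl⟩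
  simp only [pcomm, map_mul, map_inv] at h1
  exact comm_of_pcomm h1

lemma hz13 : Commute zz b13 := by
  have hC : Commute b13 (b23⁻¹ * b13 * b23) := hrel13
  have heq : (b23⁻¹ * b13 * b23)⁻¹ * b13 = b13 * (b23⁻¹ * b13 * b23)⁻¹ :=
    (hC.inv_right.eq).symm
  have hzz_u : zz = (b23⁻¹ * b13 * b23)⁻¹ * b13 := by rw [zz, pcomm]; group
  show zz * b13 = b13 * zz
  calc zz * b13 = ((b23⁻¹ * b13 * b23)⁻¹ * b13) * b13 := by rw [hzz_u]
    _ = (b13 * (b23⁻¹ * b13 * b23)⁻¹) * b13 := by rw [heq]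
    _ = b13 * ((b23⁻¹ * b13 * b23)⁻¹ * b13) := by group
    _ = b13 * zz := by rw [← hzz_u]

lemma hz23 : Commute zz b23 := by
  have hzz_v : zz = b23⁻¹ * (b13⁻¹ * b23 * b13) := by rw [zz, pcomm]; group
  show zz * b23 = b23 * zz
  calc zz * b23 = b23⁻¹ * ((b13⁻¹ * b23 * b13) * b23) := by rw [hzz_v]; group
    _ = b23⁻¹ * (b23 * (b13⁻¹ * b23 * b13)) := by rw [← hrel23]
    _ = b23 * (b23⁻¹ * (b13⁻¹ * b23 * b13)) := by group
    _ = b23 * zz := by rw [← hzz_v]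

/- ### swap lemmas -/

lemma swap_one : b23 * b13 = b13 * b23 * zz := by rw [zz, pcomm]; group

lemma swap_one' : b23⁻¹ * b13 = b13 * b23⁻¹ * zz⁻¹ := by
  have hswap1' : b13 * b23 = b23 * b13 * zz⁻¹ := by rw [zz, pcomm]; group
  calc b23⁻¹ * b13 = b23⁻¹ * (b13 * b23) * b23⁻¹ := by group
    _ = b23⁻¹ * (b23 * b13 * zz⁻¹) * b23⁻¹ := by rw [hswap1']
    _ = b13 * (zz⁻¹ * b23⁻¹) := by group
    _ = b13 * (b23⁻¹ * zz⁻¹) := by rw [(hz23.inv_left.inv_right).eq]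
    _ = b13 * b23⁻¹ * zz⁻¹ := by group

lemma swap_m (m : ℤ) : b23 ^ m * b13 = b13 * b23 ^ m * zz ^ m := by
  induction m using Int.induction_on with
  | zero => group
  | succ i ih =>
    calc b23 ^ ((i : ℤ) + 1) * b13 = b23 ^ (i : ℤ) * (b23 * b13) := by group
      _ = b23 ^ (i : ℤ) * (b13 * b23 * zz) := by rw [swap_one]
      _ = (b23 ^ (i : ℤ) * b13) * (b23 * zz) := by group
      _ = (b13 * b23 ^ (i : ℤ) * zz ^ (i : ℤ)) * (b23 * zz) := by rw [ih]
      _ = b13 * b23 ^ (i : ℤ) * (zz ^ (i : ℤ) * b23) * zz := by group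
      _ = b13 * b23 ^ (i : ℤ) * (b23 * zz ^ (i : ℤ)) * zz := by
            rw [(hz23.zpow_left (i : ℤ)).eq]
      _ = b13 * b23 ^ ((i : ℤ) + 1) * zz ^ ((i : ℤ) + 1) := by group
  | pred i ih =>
    calc b23 ^ (-(i : ℤ) - 1) * b13 = b23 ^ (-(i : ℤ)) * (b23⁻¹ * b13) := by group
      _ = b23 ^ (-(i : ℤ)) * (b13 * b23⁻¹ * zz⁻¹) := by rw [swap_one']
      _ = (b23 ^ (-(i : ℤ)) * b13) * (b23⁻¹ * zz⁻¹) := by group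
      _ = (b13 * b23 ^ (-(i : ℤ)) * zz ^ (-(i : ℤ))) * (b23⁻¹ * zz⁻¹) := by rw [ih]
      _ = b13 * b23 ^ (-(i : ℤ)) * (zz ^ (-(i : ℤ)) * b23⁻¹) * zz⁻¹ := by group
      _ = b13 * b23 ^ (-(i : ℤ)) * (b23⁻¹ * zz ^ (-(i : ℤ))) * zz⁻¹ := by
            rw [((hz23.zpow_left (-(i : ℤ))).inv_right).eq]
      _ = b13 * b23 ^ (-(i : ℤ) - 1) * zz ^ (-(i : ℤ) - 1) := by group

lemma swap_m' (m : ℤ) : b23 ^ m * b13⁻¹ = b13⁻¹ * b23 ^ m * zz ^ (-m) := by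
  calc b23 ^ m * b13⁻¹
      = b13⁻¹ * (b13 * b23 ^ m * zz ^ m) * (zz ^ (-m) * b13⁻¹) := by group
    _ = b13⁻¹ * (b23 ^ m * b13) * (zz ^ (-m) * b13⁻¹) := by rw [← swap_m]
    _ = b13⁻¹ * b23 ^ m * ((b13 * zz ^ (-m)) * b13⁻¹) := by group
    _ = b13⁻¹ * b23 ^ m * ((zz ^ (-m) * b13) * b13⁻¹) := by
          rw [← (hz13.zpow_left (-m)).eq]
    _ = b13⁻¹ * b23 ^ m * zz ^ (-m) := by group

/- ### the center element cc = b12 b13 b23 -/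

def cc : HB3 := b12 * b13 * b23

lemma cc_def : cc = b12 * b13 * b23 := rfl

lemma b12_cc : b12 = cc * b23⁻¹ * b13⁻¹ := by rw [cc_def]; group

lemma b12i_cc : b12⁻¹ = b13 * b23 * cc⁻¹ := by rw [cc_def]; group

lemma ccD : cc = (t1 * t2 * t1) * (t1 * t2 * t1) := by
  calc cc = t1 * ((t1 * t2 * t1) * (t1 * t2)) := by
        rw [cc_def, b12_t, b13_t, b23_t]; group
    _ = t1 * ((t2 * t1 * t2) * (t1 * t2)) := by rw [hbr]
    _ = t1 * (t2 * t1 * (t2 * t1 * t2)) := by group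
    _ = t1 * (t2 * t1 * (t1 * t2 * t1)) := by rw [← hbr]
    _ = (t1 * t2 * t1) * (t1 * t2 * t1) := by group

lemma hd1 : (t1 * t2 * t1) * t1 = t2 * (t1 * t2 * t1) := by
  calc (t1 * t2 * t1) * t1 = (t2 * t1 * t2) * t1 := by rw [hbr]
    _ = t2 * (t1 * t2 * t1) := by group

lemma hd2 : (t1 * t2 * t1) * t2 = t1 * (t1 * t2 * t1) := by
  calc (t1 * t2 * t1) * t2 = t1 * (t2 * t1 * t2) := by group
    _ = t1 * (t1 * t2 * t1) := by rw [← hbr]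

lemma cc_t1 : Commute cc t1 := by
  show cc * t1 = t1 * cc
  rw [ccD]
  calc (t1 * t2 * t1) * (t1 * t2 * t1) * t1
      = (t1 * t2 * t1) * ((t1 * t2 * t1) * t1) := by group
    _ = (t1 * t2 * t1) * (t2 * (t1 * t2 * t1)) := by rw [hd1]
    _ = ((t1 * t2 * t1) * t2) * (t1 * t2 * t1) := by group
    _ = (t1 * (t1 * t2 * t1)) * (t1 * t2 * t1) := by rw [hd2]
    _ = t1 * ((t1 * t2 * t1) * (t1 * t2 * t1)) := by group

lemma cc_t2 : Commute cc t2 := by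
  show cc * t2 = t2 * cc
  rw [ccD]
  calc (t1 * t2 * t1) * (t1 * t2 * t1) * t2
      = (t1 * t2 * t1) * ((t1 * t2 * t1) * t2) := by group
    _ = (t1 * t2 * t1) * (t1 * (t1 * t2 * t1)) := by rw [hd2]
    _ = ((t1 * t2 * t1) * t1) * (t1 * t2 * t1) := by group
    _ = (t2 * (t1 * t2 * t1)) * (t1 * t2 * t1) := by rw [hd1]
    _ = t2 * ((t1 * t2 * t1) * (t1 * t2 * t1)) := by group

lemma mem_closT (x : HB3) : x ∈ Subgroup.closure ({t1, t2} : Set HB3) := by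
  obtain ⟨y, rfl⟩ := QuotientGroup.mk'_surjective (Subgroup.normalClosure homotopyRels3) x
  refine PresentedGroup.generated_by braidRel3
    (Subgroup.comap pr (Subgroup.closure ({t1, t2} : Set HB3))) ?_ y
  intro j
  fin_cases j
  · exact Subgroup.subset_closure (by left; rfl)
  · exact Subgroup.subset_closure (by right; rfl)

lemma cc_central (x : HB3) : Commute cc x := by
  have hx := mem_closT x
  induction hx using Subgroup.closure_induction with
  | mem y hy =>
    simp only [Set.mem_insert_iff, Set.mem_singleton_iff] at hy
    rcases hy with rfl | rfl
    · exact cc_t1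
    · exact cc_t2
  | one => exact Commute.one_right cc
  | mul a b _ _ ha hb => exact ha.mul_right hb
  | inv a _ ha => exact ha.inv_right

/- ### pure normal forms -/

def Qp (g : HB3) : Prop := ∃ α β γ δ : ℤ, g = cc ^ α * b13 ^ β * b23 ^ γ * zz ^ δ

def Rp (g : HB3) : Prop := ∃ β γ δ : ℤ, g = b13 ^ β * b23 ^ γ * zz ^ δ

lemma Qp_one : Qp 1 := ⟨0, 0, 0, 0, by group⟩

lemma Qp.mul_b13 {g : HB3} (h : Qp g) : Qp (g * b13) := by
  obtain ⟨α, β, γ, δ, rfl⟩ := h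
  refine ⟨α, β + 1, γ, δ + γ, ?_⟩
  calc cc ^ α * b13 ^ β * b23 ^ γ * zz ^ δ * b13
      = cc ^ α * b13 ^ β * (b23 ^ γ * (zz ^ δ * b13)) := by group
    _ = cc ^ α * b13 ^ β * (b23 ^ γ * (b13 * zz ^ δ)) := by rw [(hz13.zpow_left δ).eq]
    _ = cc ^ α * b13 ^ β * ((b23 ^ γ * b13) * zz ^ δ) := by group
    _ = cc ^ α * b13 ^ β * ((b13 * b23 ^ γ * zz ^ γ) * zz ^ δ) := by rw [swap_m]
    _ = cc ^ α * b13 ^ (β + 1) * b23 ^ γ * zz ^ (δ + γ) := by group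

lemma Qp.mul_b13i {g : HB3} (h : Qp g) : Qp (g * b13⁻¹) := by
  obtain ⟨α, β, γ, δ, rfl⟩ := h
  refine ⟨α, β - 1, γ, δ - γ, ?_⟩
  calc cc ^ α * b13 ^ β * b23 ^ γ * zz ^ δ * b13⁻¹
      = cc ^ α * b13 ^ β * (b23 ^ γ * (zz ^ δ * b13⁻¹)) := by group
    _ = cc ^ α * b13 ^ β * (b23 ^ γ * (b13⁻¹ * zz ^ δ)) := by
          rw [((hz13.zpow_left δ).inv_right).eq]
    _ = cc ^ α * b13 ^ β * ((b23 ^ γ * b13⁻¹) * zz ^ δ) := by group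
    _ = cc ^ α * b13 ^ β * ((b13⁻¹ * b23 ^ γ * zz ^ (-γ)) * zz ^ δ) := by rw [swap_m']
    _ = cc ^ α * b13 ^ (β - 1) * b23 ^ γ * zz ^ (δ - γ) := by group

lemma Qp.mul_b23 {g : HB3} (h : Qp g) : Qp (g * b23) := by
  obtain ⟨α, β, γ, δ, rfl⟩ := h
  refine ⟨α, β, γ + 1, δ, ?_⟩
  calc cc ^ α * b13 ^ β * b23 ^ γ * zz ^ δ * b23
      = cc ^ α * b13 ^ β * b23 ^ γ * (zz ^ δ * b23) := by group
    _ = cc ^ α * b13 ^ β * b23 ^ γ * (b23 * zz ^ δ) := by rw [(hz23.zpow_left δ).eq]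
    _ = cc ^ α * b13 ^ β * b23 ^ (γ + 1) * zz ^ δ := by group

lemma Qp.mul_b23i {g : HB3} (h : Qp g) : Qp (g * b23⁻¹) := by
  obtain ⟨α, β, γ, δ, rfl⟩ := h
  refine ⟨α, β, γ - 1, δ, ?_⟩
  calc cc ^ α * b13 ^ β * b23 ^ γ * zz ^ δ * b23⁻¹
      = cc ^ α * b13 ^ β * b23 ^ γ * (zz ^ δ * b23⁻¹) := by group
    _ = cc ^ α * b13 ^ β * b23 ^ γ * (b23⁻¹ * zz ^ δ) := by
          rw [((hz23.zpow_left δ).inv_right).eq]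
    _ = cc ^ α * b13 ^ β * b23 ^ (γ - 1) * zz ^ δ := by group

lemma Qp.mul_cc {g : HB3} (h : Qp g) : Qp (g * cc) := by
  obtain ⟨α, β, γ, δ, rfl⟩ := h
  refine ⟨α + 1, β, γ, δ, ?_⟩
  calc cc ^ α * b13 ^ β * b23 ^ γ * zz ^ δ * cc
      = cc * (cc ^ α * b13 ^ β * b23 ^ γ * zz ^ δ) :=
        ((cc_central (cc ^ α * b13 ^ β * b23 ^ γ * zz ^ δ)).eq).symm
    _ = cc ^ (α + 1) * b13 ^ β * b23 ^ γ * zz ^ δ := by group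

lemma Qp.mul_cci {g : HB3} (h : Qp g) : Qp (g * cc⁻¹) := by
  obtain ⟨α, β, γ, δ, rfl⟩ := h
  refine ⟨α - 1, β, γ, δ, ?_⟩
  calc cc ^ α * b13 ^ β * b23 ^ γ * zz ^ δ * cc⁻¹
      = cc⁻¹ * (cc ^ α * b13 ^ β * b23 ^ γ * zz ^ δ) :=
        (((cc_central (cc ^ α * b13 ^ β * b23 ^ γ * zz ^ δ)).inv_left).eq).symm
    _ = cc ^ (α - 1) * b13 ^ β * b23 ^ γ * zz ^ δ := by group

lemma Qp.mul_b12 {g : HB3} (h : Qp g) : Qp (g * b12) := by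
  have e : g * b12 = ((g * cc) * b23⁻¹) * b13⁻¹ := by rw [b12_cc]; group
  rw [e]
  exact ((h.mul_cc).mul_b23i).mul_b13i

lemma Qp.mul_b12i {g : HB3} (h : Qp g) : Qp (g * b12⁻¹) := by
  have e : g * b12⁻¹ = ((g * b13) * b23) * cc⁻¹ := by rw [b12i_cc]; group
  rw [e]
  exact ((h.mul_b13).mul_b23).mul_cci

/- ### Rp closure lemmas -/

lemma Rp.mul_b13 {g : HB3} (h : Rp g) : Rp (g * b13) := by
  obtain ⟨β, γ, δ, rfl⟩ := h
  refine ⟨β + 1, γ, δ + γ, ?_⟩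
  calc b13 ^ β * b23 ^ γ * zz ^ δ * b13
      = b13 ^ β * (b23 ^ γ * (zz ^ δ * b13)) := by group
    _ = b13 ^ β * (b23 ^ γ * (b13 * zz ^ δ)) := by rw [(hz13.zpow_left δ).eq]
    _ = b13 ^ β * ((b23 ^ γ * b13) * zz ^ δ) := by group
    _ = b13 ^ β * ((b13 * b23 ^ γ * zz ^ γ) * zz ^ δ) := by rw [swap_m]
    _ = b13 ^ (β + 1) * b23 ^ γ * zz ^ (δ + γ) := by group

lemma Rp.mul_b13i {g : HB3} (h : Rp g) : Rp (g * b13⁻¹) := by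
  obtain ⟨β, γ, δ, rfl⟩ := h
  refine ⟨β - 1, γ, δ - γ, ?_⟩
  calc b13 ^ β * b23 ^ γ * zz ^ δ * b13⁻¹
      = b13 ^ β * (b23 ^ γ * (zz ^ δ * b13⁻¹)) := by group
    _ = b13 ^ β * (b23 ^ γ * (b13⁻¹ * zz ^ δ)) := by
          rw [((hz13.zpow_left δ).inv_right).eq]
    _ = b13 ^ β * ((b23 ^ γ * b13⁻¹) * zz ^ δ) := by group
    _ = b13 ^ β * ((b13⁻¹ * b23 ^ γ * zz ^ (-γ)) * zz ^ δ) := by rw [swap_m']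
    _ = b13 ^ (β - 1) * b23 ^ γ * zz ^ (δ - γ) := by group

lemma Rp.mul_b23 {g : HB3} (h : Rp g) : Rp (g * b23) := by
  obtain ⟨β, γ, δ, rfl⟩ := h
  refine ⟨β, γ + 1, δ, ?_⟩
  calc b13 ^ β * b23 ^ γ * zz ^ δ * b23
      = b13 ^ β * b23 ^ γ * (zz ^ δ * b23) := by group
    _ = b13 ^ β * b23 ^ γ * (b23 * zz ^ δ) := by rw [(hz23.zpow_left δ).eq]
    _ = b13 ^ β * b23 ^ (γ + 1) * zz ^ δ := by group

lemma Rp.mul_b23i {g : HB3} (h : Rp g) : Rp (g * b23⁻¹) := by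
  obtain ⟨β, γ, δ, rfl⟩ := h
  refine ⟨β, γ - 1, δ, ?_⟩
  calc b13 ^ β * b23 ^ γ * zz ^ δ * b23⁻¹
      = b13 ^ β * b23 ^ γ * (zz ^ δ * b23⁻¹) := by group
    _ = b13 ^ β * b23 ^ γ * (b23⁻¹ * zz ^ δ) := by
          rw [((hz23.zpow_left δ).inv_right).eq]
    _ = b13 ^ β * b23 ^ (γ - 1) * zz ^ δ := by group

lemma Rp.mul_b13zpow {g : HB3} (h : Rp g) (n : ℤ) : Rp (g * b13 ^ n) := by
  induction n using Int.induction_on with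
  | zero => simpa using h
  | succ i ih =>
    have e : g * b13 ^ ((i : ℤ) + 1) = (g * b13 ^ (i : ℤ)) * b13 := by group
    rw [e]; exact ih.mul_b13
  | pred i ih =>
    have e : g * b13 ^ (-(i : ℤ) - 1) = (g * b13 ^ (-(i : ℤ))) * b13⁻¹ := by group
    rw [e]; exact ih.mul_b13i

lemma Rp.mul_b23zpow {g : HB3} (h : Rp g) (n : ℤ) : Rp (g * b23 ^ n) := by
  obtain ⟨β, γ, δ, rfl⟩ := h
  refine ⟨β, γ + n, δ, ?_⟩
  calc b13 ^ β * b23 ^ γ * zz ^ δ * b23 ^ n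
      = b13 ^ β * b23 ^ γ * (zz ^ δ * b23 ^ n) := by group
    _ = b13 ^ β * b23 ^ γ * (b23 ^ n * zz ^ δ) := by
          rw [((hz23.zpow_left δ).zpow_right n).eq]
    _ = b13 ^ β * b23 ^ (γ + n) * zz ^ δ := by group

lemma Rp.mul_zzzpow {g : HB3} (h : Rp g) (n : ℤ) : Rp (g * zz ^ n) := by
  obtain ⟨β, γ, δ, rfl⟩ := h
  exact ⟨β, γ, δ + n, by group⟩

lemma Rp_pow (n : ℤ) : Rp ((b13 * b23) ^ n) := by
  induction n using Int.induction_on with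
  | zero => exact ⟨0, 0, 0, by group⟩
  | succ i ih =>
    have e : (b13 * b23) ^ ((i : ℤ) + 1) = (((b13 * b23) ^ (i : ℤ)) * b13) * b23 := by
      rw [zpow_add_one]; group
    rw [e]; exact (ih.mul_b13).mul_b23
  | pred i ih =>
    have e : (b13 * b23) ^ (-(i : ℤ) - 1) = (((b13 * b23) ^ (-(i : ℤ))) * b23⁻¹) * b13⁻¹ := by
      rw [zpow_sub_one]; group
    rw [e]; exact (ih.mul_b23i).mul_b13i

/- ### the coset representatives -/

def LamS : Set HB3 := {1, t1, t2, t2 * t1, t1 * t2, t1 * t2 * t1}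

lemma mem_1 : (1 : HB3) ∈ LamS := by left; rfl
lemma mem_t1 : t1 ∈ LamS := by right; left; rfl
lemma mem_t2 : t2 ∈ LamS := by right; right; left; rfl
lemma mem_t2t1 : t2 * t1 ∈ LamS := by right; right; right; left; rfl
lemma mem_t1t2 : t1 * t2 ∈ LamS := by right; right; right; right; left; rfl
lemma mem_t1t2t1 : t1 * t2 * t1 ∈ LamS := by right; right; right; right; right; rfl

def Pp (g : HB3) : Prop := ∃ q lam : HB3, Qp q ∧ lam ∈ LamS ∧ g = q * lam

lemma Pp_one : Pp 1 := ⟨1, 1, Qp_one, mem_1, (mul_one 1).symm⟩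

lemma Pp.glue {q lam x p lam' : HB3} (hq' : Qp (q * p)) (htr : lam * x = p * lam')
    (hl' : lam' ∈ LamS) : Pp (q * lam * x) :=
  ⟨q * p, lam', hq', hl', by rw [mul_assoc, htr, ← mul_assoc]⟩

lemma Qp.mul_one' {g : HB3} (h : Qp g) : Qp (g * 1) := by rwa [mul_one]

/- transition lemmas -/

lemma tr_t1_2 : t1 * t1 = b12 * 1 := by rw [b12_t]; group
lemma tr_t1_4 : (t2 * t1) * t1 = b13 * t2 := by rw [b13_t]; group
lemma tr_t1_6 : (t1 * t2 * t1) * t1 = b23 * (t1 * t2) := by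
  calc (t1 * t2 * t1) * t1 = t1 * b13 * t2 := by rw [b13_t]; group
    _ = (b23 * t1) * t2 := by rw [conj1]
    _ = b23 * (t1 * t2) := by group

lemma tr_t2_3 : t2 * t2 = b23 * 1 := by rw [b23_t]; group
lemma tr_t2_4 : (t2 * t1) * t2 = 1 * (t1 * t2 * t1) := by
  calc (t2 * t1) * t2 = t2 * t1 * t2 := by group
    _ = t1 * t2 * t1 := hbr.symm
    _ = 1 * (t1 * t2 * t1) := by group
lemma tr_t2_5 : (t1 * t2) * t2 = (b12 * b13 * b12⁻¹) * t1 := by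
  calc (t1 * t2) * t2 = t1 * b23 := by rw [b23_t]; group
    _ = (b12 * b13 * b12⁻¹) * t1 := by rw [conj2]
lemma tr_t2_6 : (t1 * t2 * t1) * t2 = b12 * (t2 * t1) := by
  calc (t1 * t2 * t1) * t2 = t1 * (t2 * t1 * t2) := by group
    _ = t1 * (t1 * t2 * t1) := by rw [← hbr]
    _ = b12 * (t2 * t1) := by rw [b12_t]; group

lemma tr_t1i_1 : (1 : HB3) * t1⁻¹ = b12⁻¹ * t1 := by rw [b12_t]; group
lemma tr_t1i_3 : t2 * t1⁻¹ = b13⁻¹ * (t2 * t1) := by rw [b13_t]; group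
lemma tr_t1i_5 : (t1 * t2) * t1⁻¹ = b23⁻¹ * (t1 * t2 * t1) := by
  have c1i : t1 * b13⁻¹ = b23⁻¹ * t1 := move_inv conj1
  calc (t1 * t2) * t1⁻¹ = t1 * (b13⁻¹ * (t2 * t1)) := by rw [b13_t]; group
    _ = (t1 * b13⁻¹) * (t2 * t1) := by group
    _ = (b23⁻¹ * t1) * (t2 * t1) := by rw [c1i]
    _ = b23⁻¹ * (t1 * t2 * t1) := by group

lemma tr_t2i_1 : (1 : HB3) * t2⁻¹ = b23⁻¹ * t2 := by rw [b23_t]; group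
lemma tr_t2i_2 : t1 * t2⁻¹ = (b12 * b13⁻¹ * b12⁻¹) * (t1 * t2) := by
  have c2i : t1 * b23⁻¹ = (b12 * b13 * b12⁻¹)⁻¹ * t1 := move_inv conj2
  calc t1 * t2⁻¹ = (t1 * b23⁻¹) * t2 := by rw [b23_t]; group
    _ = ((b12 * b13 * b12⁻¹)⁻¹ * t1) * t2 := by rw [c2i]
    _ = (b12 * b13⁻¹ * b12⁻¹) * (t1 * t2) := by group
lemma tr_t2i_4 : (t2 * t1) * t2⁻¹ = b12⁻¹ * (t1 * t2 * t1) := by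
  calc (t2 * t1) * t2⁻¹ = t1⁻¹ * ((t1 * t2 * t1) * t2⁻¹) := by group
    _ = t1⁻¹ * ((t2 * t1 * t2) * t2⁻¹) := by rw [hbr]
    _ = b12⁻¹ * (t1 * t2 * t1) := by rw [b12_t]; group
lemma tr_t2i_6 : (t1 * t2 * t1) * t2⁻¹ = 1 * (t2 * t1) := by
  calc (t1 * t2 * t1) * t2⁻¹ = (t2 * t1 * t2) * t2⁻¹ := by rw [hbr]
    _ = 1 * (t2 * t1) := by group

/- ### Pp closure under the generators -/

lemma Pp.mul_t1 {g : HB3} (h : Pp g) : Pp (g * t1) := by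
  obtain ⟨q, lam, hq, hlam, rfl⟩ := h
  simp only [LamS, Set.mem_insert_iff, Set.mem_singleton_iff] at hlam
  rcases hlam with rfl | rfl | rfl | rfl | rfl | rfl
  · exact Pp.glue hq.mul_one' (by group) mem_t1
  · exact Pp.glue hq.mul_b12 tr_t1_2 mem_1
  · exact Pp.glue hq.mul_one' (by group) mem_t2t1
  · exact Pp.glue hq.mul_b13 tr_t1_4 mem_t2
  · exact Pp.glue hq.mul_one' (by group) mem_t1t2t1
  · exact Pp.glue hq.mul_b23 tr_t1_6 mem_t1t2

lemma Pp.mul_t2 {g : HB3} (h : Pp g) : Pp (g * t2) := by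
  obtain ⟨q, lam, hq, hlam, rfl⟩ := h
  simp only [LamS, Set.mem_insert_iff, Set.mem_singleton_iff] at hlam
  rcases hlam with rfl | rfl | rfl | rfl | rfl | rfl
  · exact Pp.glue hq.mul_one' (by group) mem_t2
  · exact Pp.glue hq.mul_one' (by group) mem_t1t2
  · exact Pp.glue hq.mul_b23 tr_t2_3 mem_1
  · exact Pp.glue hq.mul_one' tr_t2_4 mem_t1t2t1
  · refine Pp.glue ?_ tr_t2_5 mem_t1
    have e : q * (b12 * b13 * b12⁻¹) = ((q * b12) * b13) * b12⁻¹ := by group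
    rw [e]; exact ((hq.mul_b12).mul_b13).mul_b12i
  · exact Pp.glue hq.mul_b12 tr_t2_6 mem_t2t1

lemma Pp.mul_t1i {g : HB3} (h : Pp g) : Pp (g * t1⁻¹) := by
  obtain ⟨q, lam, hq, hlam, rfl⟩ := h
  simp only [LamS, Set.mem_insert_iff, Set.mem_singleton_iff] at hlam
  rcases hlam with rfl | rfl | rfl | rfl | rfl | rfl
  · exact Pp.glue hq.mul_b12i tr_t1i_1 mem_t1
  · exact Pp.glue hq.mul_one' (by group) mem_1
  · exact Pp.glue hq.mul_b13i tr_t1i_3 mem_t2t1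
  · exact Pp.glue hq.mul_one' (by group) mem_t2
  · exact Pp.glue hq.mul_b23i tr_t1i_5 mem_t1t2t1
  · exact Pp.glue hq.mul_one' (by group) mem_t1t2

lemma Pp.mul_t2i {g : HB3} (h : Pp g) : Pp (g * t2⁻¹) := by
  obtain ⟨q, lam, hq, hlam, rfl⟩ := h
  simp only [LamS, Set.mem_insert_iff, Set.mem_singleton_iff] at hlam
  rcases hlam with rfl | rfl | rfl | rfl | rfl | rfl
  · exact Pp.glue hq.mul_b23i tr_t2i_1 mem_t2
  · refine Pp.glue ?_ tr_t2i_2 mem_t1t2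
    have e : q * (b12 * b13⁻¹ * b12⁻¹) = ((q * b12) * b13⁻¹) * b12⁻¹ := by group
    rw [e]; exact ((hq.mul_b12).mul_b13i).mul_b12i
  · exact Pp.glue hq.mul_one' (by group) mem_1
  · exact Pp.glue hq.mul_b12i tr_t2i_4 mem_t1t2t1
  · exact Pp.glue hq.mul_one' (by group) mem_t1
  · exact Pp.glue hq.mul_one' tr_t2i_6 mem_t2t1

lemma Pp_all (g : HB3) : Pp g := by
  refine Subgroup.closure_induction_right (p := fun x _ => Pp x) Pp_one ?_ ?_ (mem_closT g)
  · intro x hx y hy ih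
    simp only [Set.mem_insert_iff, Set.mem_singleton_iff] at hy
    rcases hy with rfl | rfl
    · exact ih.mul_t1
    · exact ih.mul_t2
  · intro x hx y hy ih
    simp only [Set.mem_insert_iff, Set.mem_singleton_iff] at hy
    rcases hy with rfl | rfl
    · exact ih.mul_t1i
    · exact ih.mul_t2i

lemma hcomm12 : Commute b12 (b13 * b23) := by
  have h1 : b12 * (b13 * b23) = cc := by rw [cc_def]; group
  have h2 : (b13 * b23) * b12 = cc := by
    rw [b12_cc]
    calc (b13 * b23) * (cc * b23⁻¹ * b13⁻¹) = ((b13 * b23) * cc) * (b23⁻¹ * b13⁻¹) := by group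
      _ = (cc * (b13 * b23)) * (b23⁻¹ * b13⁻¹) := by rw [← (cc_central (b13 * b23)).eq]
      _ = cc := by group
  show b12 * (b13 * b23) = (b13 * b23) * b12
  rw [h1, h2]

end NFaux

/-- Normal form in `B̂₃`. -/
theorem normal_form_HB3 (g : HB3) :
    ∃ (α β γ δ : ℤ) (lam : HB3),
      lam ∈ ({1, t1, t2, t2 * t1, t1 * t2, t1 * t2 * t1} : Set HB3) ∧
      g = b12 ^ α * b13 ^ β * b23 ^ γ * zz ^ δ * lam := by
  obtain ⟨q, lam, ⟨α, β, γ, δ, rfl⟩, hlam, rfl⟩ := NFaux.Pp_all g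
  have hccsplit : NFaux.cc ^ α = b12 ^ α * (b13 * b23) ^ α := by
    rw [NFaux.cc_def, mul_assoc]
    exact NFaux.hcomm12.mul_zpow α
  obtain ⟨β', γ', δ', hR⟩ :=
    ((((NFaux.Rp_pow α).mul_b13zpow β).mul_b23zpow γ).mul_zzzpow δ :
      NFaux.Rp ((b13 * b23) ^ α * b13 ^ β * b23 ^ γ * zz ^ δ))
  refine ⟨α, β', γ', δ', lam, hlam, ?_⟩
  calc (NFaux.cc ^ α * b13 ^ β * b23 ^ γ * zz ^ δ) * lam
      = (b12 ^ α * ((b13 * b23) ^ α * b13 ^ β * b23 ^ γ * zz ^ δ)) * lam := by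
        rw [hccsplit]; group
    _ = (b12 ^ α * (b13 ^ β' * b23 ^ γ' * zz ^ δ')) * lam := by rw [hR]
    _ = b12 ^ α * b13 ^ β' * b23 ^ γ' * zz ^ δ' * lam := by group
end
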